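/- arXiv:1910.12307 — 9 statements merged into one kernel-verified Lean document; each statement's English description precedes it below -/
import Mathlib

section
/- Let B ∈ M_m(ℂ) be invertible with B = ±Bᴴ and let A ∈ M_m(ℂ) be selfadjoint with respect to [x,y] = xᴴBy and diagonalizable. For any eigenvalue λ of A with λ ≠ conj(λ), the direct sum of the eigenspaces of A for λ and conj(λ) is a nondegenerate subspace with respect to [·,·]. -/
open Matrix

/-- The eigenspace of a matrix `A` for the scalar `lam`, as a submodule. -/
noncomputable def eigSp (m : ℕ) (A : Matrix (Fin m) (Fin m) ℂ) (lam : ℂ) :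
    Submodule ℂ (Fin m → ℂ) :=
  LinearMap.ker (A.mulVecLin - lam • LinearMap.id)

lemma mem_eigSp (m : ℕ) (A : Matrix (Fin m) (Fin m) ℂ) (lam : ℂ) (x : Fin m → ℂ) :
    x ∈ eigSp m A lam ↔ A *ᵥ x = lam • x := by
  simp [eigSp, LinearMap.mem_ker, sub_eq_zero]

lemma mulVec_eq_sum_cols (m k : ℕ) (M : Matrix (Fin m) (Fin k) ℂ) (x : Fin k → ℂ) :
    M *ᵥ x = ∑ j, x j • (fun r => M r j) := by
  funext r
  simp [Matrix.mulVec, dotProduct, Finset.sum_apply, mul_comm]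

theorem stmt3 (m : ℕ) (B A : Matrix (Fin m) (Fin m) ℂ) (hB : IsUnit B.det)
    (hBh : B = Bᴴ ∨ B = -Bᴴ) (hA : B⁻¹ * Aᴴ * B = A)
    (hdiag : ∃ P : Matrix (Fin m) (Fin m) ℂ, IsUnit P.det ∧ (P⁻¹ * A * P).IsDiag)
    (lam : ℂ) (hlam : lam ≠ star lam)
    (heig : ∃ v : Fin m → ℂ, v ≠ 0 ∧ A.mulVec v = lam • v)
    (k : ℕ) (V : Matrix (Fin m) (Fin k) ℂ)
    (hind : LinearIndependent ℂ (fun j i => V i j : Fin k → Fin m → ℂ))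
    (hspan : Submodule.span ℂ (Set.range (fun j i => V i j : Fin k → Fin m → ℂ))
      = eigSp m A lam ⊔ eigSp m A (star lam)) :
    IsUnit (Vᴴ * B * V).det := by
  obtain ⟨P, hP, hD⟩ := hdiag
  -- B * A = Aᴴ * B
  have hBA : B * A = Aᴴ * B := by
    conv_lhs => rw [← hA]
    rw [← Matrix.mul_assoc, ← Matrix.mul_assoc, Matrix.mul_nonsing_inv B hB, Matrix.one_mul]
  -- key orthogonality of eigenvectors
  have key : ∀ (u x : Fin m → ℂ) (μ ν : ℂ), A *ᵥ u = μ • u → A *ᵥ x = ν • x →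
      star μ ≠ ν → star u ⬝ᵥ (B *ᵥ x) = 0 := by
    intro u x μ ν hu hx hne
    have h1 : star u ⬝ᵥ (B *ᵥ (A *ᵥ x)) = ν * (star u ⬝ᵥ (B *ᵥ x)) := by
      rw [hx, Matrix.mulVec_smul, dotProduct_smul, smul_eq_mul]
    have h2 : star u ⬝ᵥ (B *ᵥ (A *ᵥ x)) = star μ * (star u ⬝ᵥ (B *ᵥ x)) := by
      rw [Matrix.mulVec_mulVec, hBA, ← Matrix.mulVec_mulVec, Matrix.dotProduct_mulVec,
        ← Matrix.star_mulVec, hu, star_smul, smul_dotProduct, smul_eq_mul]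
    have h3 : (star μ - ν) * (star u ⬝ᵥ (B *ᵥ x)) = 0 := by
      rw [sub_mul, ← h1, ← h2, sub_self]
    rcases mul_eq_zero.mp h3 with h | h
    · exact absurd (sub_eq_zero.mp h) hne
    · exact h
  by_contra hdet
  have hdet0 : (Vᴴ * B * V).det = 0 := by
    by_contra h; exact hdet (isUnit_iff_ne_zero.mpr h)
  obtain ⟨c, hc0, hc⟩ := Matrix.exists_mulVec_eq_zero_iff.mpr hdet0
  set w := V *ᵥ c with hw
  -- the submodule of vectors B-orthogonal to w
  let N : Submodule ℂ (Fin m → ℂ) :=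
  { carrier := {u | star u ⬝ᵥ (B *ᵥ w) = 0}
    add_mem' := by
      intro a b ha hb
      simp only [Set.mem_setOf_eq] at *
      rw [star_add, add_dotProduct, ha, hb, add_zero]
    zero_mem' := by simp
    smul_mem' := by
      intro a u hu
      simp only [Set.mem_setOf_eq] at *
      rw [star_smul, smul_dotProduct, hu, smul_zero] }
  -- columns of V are in N
  have hcolV : ∀ i : Fin k, (fun r => V r i) ∈ N := by
    intro i
    have h0 : Vᴴ *ᵥ (B *ᵥ w) = 0 := by
      rw [hw, Matrix.mulVec_mulVec, Matrix.mulVec_mulVec]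
      exact hc
    have h1 : (Vᴴ *ᵥ (B *ᵥ w)) i = 0 := by rw [h0]; rfl
    show star (fun r => V r i) ⬝ᵥ (B *ᵥ w) = 0
    rw [← h1]
    simp [Matrix.mulVec, dotProduct, Matrix.conjTranspose_apply]
  -- S ⊆ N
  have hSN : eigSp m A lam ⊔ eigSp m A (star lam) ≤ N := by
    rw [← hspan]
    refine Submodule.span_le.mpr ?_
    rintro _ ⟨i, rfl⟩
    exact hcolV i
  -- w ∈ S
  have hwS : w ∈ eigSp m A lam ⊔ eigSp m A (star lam) := by
    rw [← hspan, hw, mulVec_eq_sum_cols]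
    exact Submodule.sum_mem _ fun j _ =>
      Submodule.smul_mem _ _ (Submodule.subset_span ⟨j, rfl⟩)
  obtain ⟨w1, hw1, w2, hw2, hsum⟩ := Submodule.mem_sup.mp hwS
  -- columns of P are eigenvectors
  have hAP : A * P = P * (P⁻¹ * A * P) := by
    rw [← Matrix.mul_assoc, ← Matrix.mul_assoc, Matrix.mul_nonsing_inv P hP, Matrix.one_mul]
  have hcolP : ∀ j : Fin m, A *ᵥ (fun r => P r j) = (P⁻¹ * A * P) j j • (fun r => P r j) := by
    intro j
    have h1 : (fun r => P r j) = P *ᵥ (Pi.single j 1) := by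
      funext r
      simp [Matrix.mulVec_single]
    have h2 : (P⁻¹ * A * P) *ᵥ (Pi.single j 1)
        = (P⁻¹ * A * P) j j • (Pi.single j 1 : Fin m → ℂ) := by
      funext r
      by_cases hrj : r = j
      · subst hrj; simp [Matrix.mulVec_single]
      · simp [Matrix.mulVec_single, Pi.single_eq_of_ne hrj, hD hrj]
    rw [h1, Matrix.mulVec_mulVec, hAP, ← Matrix.mulVec_mulVec, h2, Matrix.mulVec_smul]
  -- columns of P are in N
  have hPN : ∀ j : Fin m, (fun r => P r j) ∈ N := by
    intro j
    by_cases h1 : star ((P⁻¹ * A * P) j j) = lam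
    · have hmem : (fun r => P r j) ∈ eigSp m A (star lam) := by
        rw [mem_eigSp, hcolP j, ← h1, star_star]
      exact hSN (Submodule.mem_sup_right hmem)
    · by_cases h2 : star ((P⁻¹ * A * P) j j) = star lam
      · have hmem : (fun r => P r j) ∈ eigSp m A lam := by
          rw [mem_eigSp, hcolP j, star_injective h2]
        exact hSN (Submodule.mem_sup_left hmem)
      · have k1 := key (fun r => P r j) w1 ((P⁻¹ * A * P) j j) lam (hcolP j)
          ((mem_eigSp m A lam w1).mp hw1) h1
        have k2 := key (fun r => P r j) w2 ((P⁻¹ * A * P) j j) (star lam) (hcolP j)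
          ((mem_eigSp m A (star lam) w2).mp hw2) h2
        show star (fun r => P r j) ⬝ᵥ (B *ᵥ w) = 0
        rw [← hsum, Matrix.mulVec_add, dotProduct_add, k1, k2, add_zero]
  -- every vector is in N
  have hall : ∀ v : Fin m → ℂ, v ∈ N := by
    intro v
    have hv : v = P *ᵥ (P⁻¹ *ᵥ v) := by
      rw [Matrix.mulVec_mulVec, Matrix.mul_nonsing_inv P hP, Matrix.one_mulVec]
    rw [hv, mulVec_eq_sum_cols]
    exact Submodule.sum_mem _ fun j _ => Submodule.smul_mem _ _ (hPN j)
  -- hence B *ᵥ w = 0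
  have hBw : B *ᵥ w = 0 := by
    funext i
    have := hall (Pi.single i 1)
    simp only [Submodule.mem_mk, AddSubmonoid.mem_mk, AddSubsemigroup.mem_mk,
      Set.mem_setOf_eq, N] at this
    simpa [dotProduct, Pi.single_apply, apply_ite] using this
  -- hence w = 0
  have hw0 : w = 0 := by
    have : w = B⁻¹ *ᵥ (B *ᵥ w) := by
      rw [Matrix.mulVec_mulVec, Matrix.nonsing_inv_mul B hB, Matrix.one_mulVec]
    rw [this, hBw, Matrix.mulVec_zero]
  -- contradiction with linear independence
  have hzero : ∑ j, c j • (fun i => V i j) = (0 : Fin m → ℂ) := by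
    rw [← mulVec_eq_sum_cols, ← hw, hw0]
  have := Fintype.linearIndependent_iff.mp hind c hzero
  exact hc0 (funext this)
end

section
/- Let B ∈ M_m(ℂ) be invertible with B = ±Bᴴ and let A ∈ M_m(ℂ) be selfadjoint with respect to [x,y] = xᴴBy and diagonalizable. For any real eigenvalue μ of A, the eigenspace of A for μ is nondegenerate with respect to [·,·]. -/
open Matrix

theorem stmt4 (m : ℕ) (B A : Matrix (Fin m) (Fin m) ℂ) (hB : IsUnit B.det)
    (hBh : B = Bᴴ ∨ B = -Bᴴ) (hA : B⁻¹ * Aᴴ * B = A)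
    (hdiag : ∃ P : Matrix (Fin m) (Fin m) ℂ, IsUnit P.det ∧ (P⁻¹ * A * P).IsDiag)
    (mu : ℂ) (hmu : mu.im = 0)
    (heig : ∃ v : Fin m → ℂ, v ≠ 0 ∧ A.mulVec v = mu • v)
    (k : ℕ) (V : Matrix (Fin m) (Fin k) ℂ)
    (hind : LinearIndependent ℂ (fun j i => V i j : Fin k → Fin m → ℂ))
    (hspan : Submodule.span ℂ (Set.range (fun j i => V i j : Fin k → Fin m → ℂ))
      = eigSp m A mu) :
    IsUnit (Vᴴ * B * V).det := by
  rw [← Matrix.isUnit_iff_isUnit_det, ← Matrix.mulVec_injective_iff_isUnit,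
    ← Matrix.coe_mulVecLin]
  rw [injective_iff_map_eq_zero]
  intro x hx
  simp only [Matrix.mulVecLin_apply] at hx
  -- AᴴB = BA
  have hAB : Aᴴ * B = B * A := by
    conv_rhs => rw [← hA]
    rw [← Matrix.mul_assoc, ← Matrix.mul_assoc, Matrix.mul_nonsing_inv _ hB, Matrix.one_mul]
  set v : Fin m → ℂ := V *ᵥ x with hv
  -- v is in the eigenspace
  have hvmem : v ∈ eigSp m A mu := by
    rw [← hspan]
    have : v = ∑ j, x j • (fun i => V i j) := by
      funext i
      simp [hv, Matrix.mulVec, dotProduct, mul_comm]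
    rw [this]
    exact Submodule.sum_mem _ fun j _ => Submodule.smul_mem _ _
      (Submodule.subset_span ⟨j, rfl⟩)
  have hAv : A *ᵥ v = mu • v := by
    have := hvmem
    simp only [eigSp, LinearMap.mem_ker, LinearMap.sub_apply, LinearMap.smul_apply,
      LinearMap.id_apply, Matrix.mulVecLin_apply, sub_eq_zero] at this
    exact this
  -- columns of V are orthogonal to B v
  have hcol : ∀ j, star (fun i => V i j) ⬝ᵥ (B *ᵥ v) = 0 := by
    intro j
    have h0 : Vᴴ *ᵥ (B *ᵥ v) = 0 := by
      rw [hv, Matrix.mulVec_mulVec, Matrix.mulVec_mulVec]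
      exact hx
    have := congrFun h0 j
    simpa [Matrix.mulVec, dotProduct, Matrix.conjTranspose_apply] using this
  -- everything in the eigenspace is orthogonal to B v
  have heigsp : ∀ w ∈ eigSp m A mu, star w ⬝ᵥ (B *ᵥ v) = 0 := by
    intro w hw
    rw [← hspan] at hw
    induction hw using Submodule.span_induction with
    | mem w hw =>
      obtain ⟨j, rfl⟩ := hw
      exact hcol j
    | zero => simp
    | add a b _ _ ha hb => rw [star_add, add_dotProduct, ha, hb, add_zero]
    | smul c a _ ha => rw [star_smul, smul_dotProduct, ha, smul_zero]
  -- any eigenvector is orthogonal to B v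
  have heigvec : ∀ (nu : ℂ) (u : Fin m → ℂ), A *ᵥ u = nu • u →
      star u ⬝ᵥ (B *ᵥ v) = 0 := by
    intro nu u hu
    by_cases hnu : (starRingEnd ℂ) nu = mu
    · have hnumu : nu = mu := by
        have : (starRingEnd ℂ) mu = mu := Complex.conj_eq_iff_im.2 hmu
        rw [← this] at hnu
        exact star_injective (by simpa using hnu)
      exact heigsp u (by
        simp only [eigSp, LinearMap.mem_ker, LinearMap.sub_apply, LinearMap.smul_apply,
          LinearMap.id_apply, Matrix.mulVecLin_apply, sub_eq_zero]
        rw [hu, hnumu])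
    · have key : (starRingEnd ℂ) nu * (star u ⬝ᵥ (B *ᵥ v))
          = mu * (star u ⬝ᵥ (B *ᵥ v)) := by
        have h1 : star (A *ᵥ u) ⬝ᵥ (B *ᵥ v)
            = (starRingEnd ℂ) nu * (star u ⬝ᵥ (B *ᵥ v)) := by
          rw [hu, star_smul, smul_dotProduct]
          simp [smul_eq_mul]
        have h2 : star (A *ᵥ u) ⬝ᵥ (B *ᵥ v) = mu * (star u ⬝ᵥ (B *ᵥ v)) := by
          rw [Matrix.star_mulVec, Matrix.dotProduct_mulVec, Matrix.vecMul_vecMul, hAB,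
            ← Matrix.vecMul_vecMul, ← Matrix.dotProduct_mulVec, hAv,
            dotProduct_smul, smul_eq_mul, ← Matrix.dotProduct_mulVec]
        rw [← h1, h2]
      have := sub_eq_zero.2 key
      rw [← sub_mul] at this
      rcases mul_eq_zero.1 this with h | h
      · exact absurd (sub_eq_zero.1 h) hnu
      · exact h
  -- B v = 0 using the diagonalization
  obtain ⟨P, hP, hD⟩ := hdiag
  have hPcol : ∀ j, A *ᵥ (fun i => P i j) = (P⁻¹ * A * P) j j • (fun i => P i j) := by
    intro j
    have hAP : A * P = P * (P⁻¹ * A * P) := by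
      rw [← Matrix.mul_assoc, ← Matrix.mul_assoc, Matrix.mul_nonsing_inv _ hP, Matrix.one_mul]
    have h1 : A *ᵥ (fun i => P i j) = (A * P) *ᵥ (Pi.single j 1) := by
      rw [← Matrix.mulVec_mulVec]
      congr 1
      funext i
      simp [Matrix.mulVec_single]
    rw [h1, hAP, ← Matrix.mulVec_mulVec]
    have h2 : (P⁻¹ * A * P) *ᵥ (Pi.single j 1) = (P⁻¹ * A * P) j j • (Pi.single j 1 : Fin m → ℂ) := by
      funext i
      rcases eq_or_ne i j with rfl | hij
      · simp [Matrix.mulVec_single]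
      · simp [Matrix.mulVec_single, hD hij, Pi.single_eq_of_ne hij]
    rw [h2, Matrix.mulVec_smul]
    congr 1
    funext i
    simp [Matrix.mulVec_single]
  have hPh : Pᴴ *ᵥ (B *ᵥ v) = 0 := by
    funext j
    have := heigvec _ _ (hPcol j)
    simpa [Matrix.mulVec, dotProduct, Matrix.conjTranspose_apply] using this
  have hBv : B *ᵥ v = 0 := by
    have hPhu : IsUnit Pᴴ.det := by
      rw [Matrix.det_conjTranspose]
      exact hP.star
    have hinj : Function.Injective (Pᴴ).mulVec :=
      Matrix.mulVec_injective_iff_isUnit.2 (Matrix.isUnit_iff_isUnit_det _ |>.2 hPhu)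
    apply hinj
    rw [hPh, Matrix.mulVec_zero]
  have hv0 : v = 0 := by
    have hinj : Function.Injective B.mulVec :=
      Matrix.mulVec_injective_iff_isUnit.2 (Matrix.isUnit_iff_isUnit_det _ |>.2 hB)
    apply hinj
    rw [hBv, Matrix.mulVec_zero]
  -- x = 0 by linear independence
  have hsum : ∑ j, x j • (fun i => V i j : Fin m → ℂ) = 0 := by
    rw [← hv0, hv]
    funext i
    simp [Matrix.mulVec, dotProduct, mul_comm]
  exact funext (Fintype.linearIndependent_iff.1 hind x hsum)
end

section
/- A diagonalizable skew-Hamiltonian matrix A ∈ M_{2n}(ℂ) with no real eigenvalues is symplectically diagonalizable, i.e. there exists a symplectic matrix S (SᴴJS = J where J = [[0, I_n],[−I_n, 0]]) such that S⁻¹AS is diagonal. -/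
open Matrix

/-- The matrix `J_{2n} = [[0, I], [-I, 0]]`. -/
def Jmat (n : ℕ) : Matrix (Fin n ⊕ Fin n) (Fin n ⊕ Fin n) ℂ :=
  Matrix.fromBlocks 0 1 (-1) 0

private lemma exists_comp_perm_fin {α : Type*} [LinearOrder α] {N : ℕ} (f g : Fin N → α)
    (h : Multiset.map f Finset.univ.val = Multiset.map g Finset.univ.val) :
    ∃ σ : Equiv.Perm (Fin N), f ∘ σ = g := by
  have hfg : f ∘ Tuple.sort f = g ∘ Tuple.sort g := by
    apply List.ofFn_injective
    refine List.Perm.eq_of_sortedLE (Tuple.monotone_sort f).sortedLE_ofFn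
      (Tuple.monotone_sort g).sortedLE_ofFn ?_
    have h1 := (Tuple.sort f).ofFn_comp_perm f
    have h2 := (Tuple.sort g).ofFn_comp_perm g
    have h3 : ((List.ofFn f : List α) : Multiset α) = (List.ofFn g : List α) := by
      rw [← Fin.univ_val_map, ← Fin.univ_val_map]; exact h
    exact h1.trans ((Multiset.coe_eq_coe.mp h3).trans h2.symm)
  refine ⟨(Tuple.sort g).symm.trans (Tuple.sort f), ?_⟩
  funext j
  have := congrFun hfg ((Tuple.sort g).symm j)
  simpa using this

private lemma exists_comp_perm {α : Type*} [LinearOrder α] {ι : Type*} [Fintype ι]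
    [DecidableEq ι] (f g : ι → α)
    (h : Multiset.map f Finset.univ.val = Multiset.map g Finset.univ.val) :
    ∃ σ : Equiv.Perm ι, f ∘ σ = g := by
  let e := Fintype.equivFin ι
  have h' : Multiset.map (f ∘ e.symm) Finset.univ.val
      = Multiset.map (g ∘ e.symm) Finset.univ.val := by
    rw [← Multiset.map_map f e.symm, ← Multiset.map_map g e.symm,
      Multiset.map_univ_val_equiv]
    exact h
  obtain ⟨σ', hσ'⟩ := exists_comp_perm_fin _ _ h'
  refine ⟨(e.trans σ').trans e.symm, ?_⟩
  funext i
  have := congrFun hσ' (e i)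
  simpa using this

private lemma exists_comp_perm_c {ι : Type*} [Fintype ι] [DecidableEq ι] (f g : ι → ℂ)
    (h : Multiset.map f Finset.univ.val = Multiset.map g Finset.univ.val) :
    ∃ σ : Equiv.Perm ι, f ∘ σ = g := by
  letI : LinearOrder ℂ := LinearOrder.lift' (fun z => toLex (z.re, z.im))
    (fun z w hzw => by
      have h2 := toLex.injective hzw
      exact Complex.ext (congrArg Prod.fst h2) (congrArg Prod.snd h2))
  exact exists_comp_perm f g h

theorem stmt5 (n : ℕ) (A : Matrix (Fin n ⊕ Fin n) (Fin n ⊕ Fin n) ℂ)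
    (hstruct : (Jmat n)ᵀ * Aᴴ * Jmat n = A)
    (hdiag : ∃ P : Matrix (Fin n ⊕ Fin n) (Fin n ⊕ Fin n) ℂ,
      IsUnit P.det ∧ (P⁻¹ * A * P).IsDiag)
    (hspec : ∀ μ ∈ spectrum ℂ A, μ.im ≠ 0) :
    ∃ S : Matrix (Fin n ⊕ Fin n) (Fin n ⊕ Fin n) ℂ,
      Sᴴ * Jmat n * S = Jmat n ∧ (S⁻¹ * A * S).IsDiag := by
  classical
  obtain ⟨P, hP, hD⟩ := hdiag
  -- basic facts about J
  have hJT : (Jmat n)ᵀ = -Jmat n := by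
    rw [Jmat, Matrix.fromBlocks_transpose, Matrix.fromBlocks_neg]
    simp
  have hJJ : Jmat n * Jmat n = -1 := by
    rw [Jmat, Matrix.fromBlocks_multiply,
      show (-1 : Matrix (Fin n ⊕ Fin n) (Fin n ⊕ Fin n) ℂ)
        = -(Matrix.fromBlocks 1 0 0 1) from by rw [Matrix.fromBlocks_one],
      Matrix.fromBlocks_neg]
    simp
  have hJH : (Jmat n)ᴴ = -Jmat n := by
    rw [Jmat, Matrix.fromBlocks_conjTranspose, Matrix.fromBlocks_neg]
    simp
  have hdetJ : (Jmat n).det ≠ 0 := by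
    intro h0
    have : (Jmat n * Jmat n).det = 1 := by
      rw [hJJ]
      have : (-1 : Matrix (Fin n ⊕ Fin n) (Fin n ⊕ Fin n) ℂ) = -(1 : Matrix _ _ ℂ) := rfl
      rw [this, Matrix.det_neg, Matrix.det_one]
      simp [Fintype.card_sum, pow_add, ← mul_pow]
    rw [Matrix.det_mul, h0, mul_zero] at this
    exact zero_ne_one this
  have hAJ : Aᴴ * Jmat n = Jmat n * A := by
    conv_rhs => rw [← hstruct]
    rw [hJT]
    have h1 : Jmat n * (-Jmat n * Aᴴ * Jmat n) = (-(Jmat n * Jmat n)) * (Aᴴ * Jmat n) := by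
      noncomm_ring
    rw [h1, hJJ]
    simp
  -- the diagonal entries
  set d : Fin n ⊕ Fin n → ℂ := fun i => (P⁻¹ * A * P) i i with hd
  have hDD : P⁻¹ * A * P = Matrix.diagonal d := by
    ext i j
    by_cases h : i = j
    · subst h; simp [Matrix.diagonal_apply_eq, hd]
    · rw [Matrix.diagonal_apply_ne _ h]; exact hD h
  have hAP : A * P = P * Matrix.diagonal d := by
    calc A * P = (P * P⁻¹) * (A * P) := by rw [Matrix.mul_nonsing_inv _ hP, one_mul]
    _ = P * (P⁻¹ * A * P) := by noncomm_ring
    _ = P * Matrix.diagonal d := by rw [hDD]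
  have hA' : A = P * Matrix.diagonal d * P⁻¹ := by
    calc A = (A * P) * P⁻¹ := by rw [Matrix.mul_assoc, Matrix.mul_nonsing_inv _ hP, mul_one]
    _ = P * Matrix.diagonal d * P⁻¹ := by rw [hAP]
  -- characteristic-polynomial-style identity
  have key : ∀ w : ℂ, (w • (1 : Matrix (Fin n ⊕ Fin n) (Fin n ⊕ Fin n) ℂ) - A).det
      = ∏ i, (w - d i) := by
    intro w
    have h1 : w • (1 : Matrix (Fin n ⊕ Fin n) (Fin n ⊕ Fin n) ℂ) - A
        = P * (w • 1 - Matrix.diagonal d) * P⁻¹ := by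
      rw [hA', Matrix.mul_sub, Matrix.sub_mul]
      congr 1
      rw [Matrix.mul_smul, mul_one, Matrix.smul_mul, Matrix.mul_nonsing_inv _ hP]
    have h2 : w • (1 : Matrix (Fin n ⊕ Fin n) (Fin n ⊕ Fin n) ℂ) - Matrix.diagonal d
        = Matrix.diagonal (fun i => w - d i) := by
      rw [Matrix.smul_one_eq_diagonal, Matrix.diagonal_sub]
    rw [h1, Matrix.det_mul, Matrix.det_mul, mul_comm, ← mul_assoc, ← Matrix.det_mul,
      Matrix.nonsing_inv_mul _ hP, Matrix.det_one, one_mul, h2, Matrix.det_diagonal]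
  -- the eigenvalues are not real
  have him : ∀ i, (d i).im ≠ 0 := by
    intro i
    apply hspec
    rw [spectrum.mem_iff]
    intro hu
    rw [Matrix.isUnit_iff_isUnit_det, Algebra.algebraMap_eq_smul_one, key (d i)] at hu
    have h0 : ∏ j, (d i - d j) = 0 :=
      Finset.prod_eq_zero (Finset.mem_univ i) (sub_self _)
    rw [h0] at hu
    exact hu.ne_zero rfl
  -- the multiset of eigenvalues is closed under conjugation
  have hprod : ∀ w : ℂ, ∏ i, (w - d i) = ∏ i, (w - (starRingEnd ℂ) (d i)) := by
    intro w
    have hmul : (w • (1 : Matrix (Fin n ⊕ Fin n) (Fin n ⊕ Fin n) ℂ) - Aᴴ) * Jmat n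
        = Jmat n * (w • 1 - A) := by
      rw [Matrix.sub_mul, Matrix.mul_sub, hAJ, Matrix.smul_mul, one_mul,
        Matrix.mul_smul, mul_one]
    have h1 : (w • (1 : Matrix (Fin n ⊕ Fin n) (Fin n ⊕ Fin n) ℂ) - Aᴴ).det
        = (w • 1 - A).det := by
      have := congrArg Matrix.det hmul
      rw [Matrix.det_mul, Matrix.det_mul, mul_comm ((Jmat n).det)] at this
      exact mul_right_cancel₀ hdetJ this
    have h2 : w • (1 : Matrix (Fin n ⊕ Fin n) (Fin n ⊕ Fin n) ℂ) - Aᴴ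
        = ((starRingEnd ℂ w) • 1 - A)ᴴ := by
      rw [Matrix.conjTranspose_sub, Matrix.conjTranspose_smul, Matrix.conjTranspose_one]
      simp
    have h3 : (starRingEnd ℂ) ((starRingEnd ℂ w • (1 : Matrix (Fin n ⊕ Fin n)
        (Fin n ⊕ Fin n) ℂ) - A).det) = (w • 1 - A).det := by
      rw [← h1, h2, Matrix.det_conjTranspose]
      rfl
    rw [← key w, ← h3, key (starRingEnd ℂ w), map_prod]
    apply Finset.prod_congr rfl
    intro i _
    rw [map_sub]
    simp
  have hms : Multiset.map d Finset.univ.val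
      = Multiset.map (fun i => (starRingEnd ℂ) (d i)) Finset.univ.val := by
    have hpq : (Multiset.map (fun a => Polynomial.X - Polynomial.C a)
          (Multiset.map d Finset.univ.val)).prod
        = (Multiset.map (fun a => Polynomial.X - Polynomial.C a)
          (Multiset.map (fun i => (starRingEnd ℂ) (d i)) Finset.univ.val)).prod := by
      apply Polynomial.funext
      intro w
      rw [Polynomial.eval_multiset_prod, Polynomial.eval_multiset_prod]
      simp only [Multiset.map_map, Function.comp_def, Polynomial.eval_sub,
        Polynomial.eval_X, Polynomial.eval_C]
      rw [← Finset.prod_eq_multiset_prod, ← Finset.prod_eq_multiset_prod]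
      exact hprod w
    have := congrArg Polynomial.roots hpq
    rwa [Polynomial.roots_multiset_prod_X_sub_C, Polynomial.roots_multiset_prod_X_sub_C]
      at this
  -- split the multiset
  set m : Multiset ℂ := Multiset.map d Finset.univ.val with hm
  have hconj : Multiset.map (starRingEnd ℂ) m = m := by
    rw [hm, Multiset.map_map]
    exact hms.symm
  set m₀ : Multiset ℂ := Multiset.filter (fun z => 0 < z.im) m with hm₀
  have hsplit : m = m₀ + Multiset.map (starRingEnd ℂ) m₀ := by
    have h2 : Multiset.filter (fun z => ¬ 0 < z.im) m
        = Multiset.map (starRingEnd ℂ) m₀ := by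
      conv_lhs => rw [← hconj]
      rw [Multiset.filter_map]
      congr 1
      apply Multiset.filter_congr
      intro z hz
      obtain ⟨i, _, rfl⟩ := Multiset.mem_map.mp hz
      have := him i
      constructor
      · intro h
        simp only [Function.comp, Complex.conj_im, not_lt, neg_nonpos] at h ⊢
        rcases lt_or_eq_of_le h with h' | h'
        · exact h'
        · exact absurd h'.symm this
      · intro h
        simp only [Function.comp, Complex.conj_im, not_lt, neg_nonpos]
        exact le_of_lt h
    rw [← h2, hm₀, Multiset.filter_add_not]
  have hcardm : Multiset.card m = n + n := by
    rw [hm, Multiset.card_map]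
    simp [Fintype.card_sum]
  have hcard : Multiset.card m₀ = n := by
    have h2 := congrArg Multiset.card hsplit
    rw [hcardm, Multiset.card_add, Multiset.card_map] at h2
    omega
  -- enumerate m₀
  obtain ⟨g, hg⟩ : ∃ g : Fin n → ℂ, Multiset.map g Finset.univ.val = m₀ := by
    have hlen : m₀.toList.length = n := by rw [Multiset.length_toList, hcard]
    refine ⟨fun i => m₀.toList.get (Fin.cast hlen.symm i), ?_⟩
    rw [Fin.univ_val_map]
    exact (congrArg _ ((List.ofFn_congr hlen m₀.toList.get).symm.trans
      (List.ofFn_get _))).trans (Multiset.coe_toList m₀)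
  have himg : ∀ a, 0 < (g a).im := by
    intro a
    have h5 : g a ∈ m₀ := by
      rw [← hg]
      exact Multiset.mem_map_of_mem g (Finset.mem_univ_val a)
    rw [hm₀] at h5
    exact (Multiset.mem_filter.mp h5).2
  -- the target diagonal
  set d' : Fin n ⊕ Fin n → ℂ := Sum.elim g (fun b => (starRingEnd ℂ) (g b)) with hd'
  have hsum : Multiset.map d' Finset.univ.val = m₀ + Multiset.map (starRingEnd ℂ) m₀ := by
    have huniv : (Finset.univ : Finset (Fin n ⊕ Fin n)).val
        = Multiset.map Sum.inl Finset.univ.val + Multiset.map Sum.inr Finset.univ.val := by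
      rw [← Finset.univ_disjSum_univ, Finset.val_disjSum]
      rfl
    rw [huniv, Multiset.map_add, Multiset.map_map, Multiset.map_map, ← hg,
      Multiset.map_map]
    rfl
  obtain ⟨σ, hσ⟩ : ∃ σ : Equiv.Perm (Fin n ⊕ Fin n), d ∘ σ = d' := by
    apply exists_comp_perm_c
    rw [hsum, ← hsplit, hm]
  have hdσ : ∀ j, d (σ j) = d' j := fun j => congrFun hσ j
  -- the permuted eigenvector matrix
  set Q : Matrix (Fin n ⊕ Fin n) (Fin n ⊕ Fin n) ℂ := P.submatrix id σ with hQ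
  have hQA : A * Q = Q * Matrix.diagonal d' := by
    have e1 : A * Q = (A * P).submatrix id σ := by
      ext i j
      simp [hQ, Matrix.mul_apply]
    rw [e1, hAP]
    ext i j
    simp [Matrix.mul_diagonal, hQ, hdσ j]
  have hQdet : IsUnit Q.det := by
    rw [hQ, Matrix.det_permute']
    rw [isUnit_iff_ne_zero]
    apply mul_ne_zero
    · rcases Int.units_eq_one_or (Equiv.Perm.sign σ) with h | h <;> simp [h]
    · exact hP.ne_zero
  -- the Gram matrix
  set G : Matrix (Fin n ⊕ Fin n) (Fin n ⊕ Fin n) ℂ := Qᴴ * Jmat n * Q with hG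
  have hGcomm : (Matrix.diagonal d')ᴴ * G = G * Matrix.diagonal d' := by
    have h1 : (Matrix.diagonal d')ᴴ * Qᴴ = Qᴴ * Aᴴ := by
      rw [← Matrix.conjTranspose_mul, ← hQA, Matrix.conjTranspose_mul]
    calc (Matrix.diagonal d')ᴴ * G
        = ((Matrix.diagonal d')ᴴ * Qᴴ) * (Jmat n * Q) := by rw [hG]; noncomm_ring
      _ = Qᴴ * (Aᴴ * Jmat n) * Q := by rw [h1]; noncomm_ring
      _ = Qᴴ * (Jmat n * A) * Q := by rw [hAJ]
      _ = (Qᴴ * Jmat n) * (A * Q) := by noncomm_ring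
      _ = (Qᴴ * Jmat n) * (Q * Matrix.diagonal d') := by rw [hQA]
      _ = G * Matrix.diagonal d' := by rw [hG]; noncomm_ring
  have hent : ∀ i j, (starRingEnd ℂ) (d' i) * G i j = G i j * d' j := by
    intro i j
    have h0 := congrFun (congrFun hGcomm i) j
    rwa [Matrix.diagonal_conjTranspose, Matrix.diagonal_mul, Matrix.mul_diagonal] at h0
  have hGskew : Gᴴ = -G := by
    rw [hG]
    calc (Qᴴ * Jmat n * Q)ᴴ = Qᴴ * ((Jmat n)ᴴ * Q) := by
          rw [Matrix.conjTranspose_mul, Matrix.conjTranspose_mul,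
            Matrix.conjTranspose_conjTranspose]
      _ = -(Qᴴ * Jmat n * Q) := by rw [hJH]; noncomm_ring
  -- block structure of G
  set B : Matrix (Fin n) (Fin n) ℂ := G.toBlocks₁₂ with hB
  have hBab : ∀ a b, B a b = G (Sum.inl a) (Sum.inr b) := fun a b => rfl
  have him_ne : ∀ a b, (starRingEnd ℂ) (g a) ≠ g b := by
    intro a b h
    have h1 := congrArg Complex.im h
    rw [Complex.conj_im] at h1
    have := himg a; have := himg b
    linarith [h1]
  have hGblocks : G = Matrix.fromBlocks 0 B (-Bᴴ) 0 := by
    ext i j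
    cases i with
    | inl a =>
      cases j with
      | inl b =>
        rw [Matrix.fromBlocks_apply₁₁, Matrix.zero_apply]
        have h0 := hent (Sum.inl a) (Sum.inl b)
        simp only [hd', Sum.elim_inl] at h0
        by_contra hne
        have h2 : (starRingEnd ℂ) (g a) = g b := by
          rw [mul_comm (G (Sum.inl a) (Sum.inl b))] at h0
          exact mul_right_cancel₀ hne h0
        exact him_ne a b h2
      | inr b =>
        rw [Matrix.fromBlocks_apply₁₂]
        exact (hBab a b).symm
    | inr a =>
      cases j with
      | inl b =>
        rw [Matrix.fromBlocks_apply₂₁, Matrix.neg_apply, Matrix.conjTranspose_apply,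
          hBab]
        have h0 := congrFun (congrFun hGskew (Sum.inr a)) (Sum.inl b)
        simp only [Matrix.conjTranspose_apply, Matrix.neg_apply] at h0
        linear_combination h0
      | inr b =>
        rw [Matrix.fromBlocks_apply₂₂, Matrix.zero_apply]
        have h0 := hent (Sum.inr a) (Sum.inr b)
        simp only [hd', Sum.elim_inr] at h0
        by_contra hne
        have h2 : (starRingEnd ℂ) ((starRingEnd ℂ) (g a)) = (starRingEnd ℂ) (g b) := by
          rw [mul_comm (G (Sum.inr a) (Sum.inr b))] at h0
          exact mul_right_cancel₀ hne h0
        have h3 : g a = (starRingEnd ℂ) (g b) := by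
          simpa using h2
        exact him_ne b a h3.symm
  -- B commutes with diagonal (conj ∘ g)
  have hBd : Matrix.diagonal (fun b => (starRingEnd ℂ) (g b)) * B
      = B * Matrix.diagonal (fun b => (starRingEnd ℂ) (g b)) := by
    ext a b
    rw [Matrix.diagonal_mul, Matrix.mul_diagonal]
    have h0 := hent (Sum.inl a) (Sum.inr b)
    simpa [hd', hBab] using h0
  -- B is invertible
  have hBdet : IsUnit B.det := by
    have hdetG : G.det ≠ 0 := by
      rw [hG, Matrix.det_mul, Matrix.det_mul]
      apply mul_ne_zero
      apply mul_ne_zero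
      · rw [Matrix.det_conjTranspose]
        simpa using hQdet.ne_zero
      · exact hdetJ
      · exact hQdet.ne_zero
    have hfact : G = (Matrix.fromBlocks 0 1 1 0 : Matrix (Fin n ⊕ Fin n) (Fin n ⊕ Fin n) ℂ)
        * Matrix.fromBlocks (-Bᴴ) 0 0 B := by
      rw [hGblocks, Matrix.fromBlocks_multiply]
      simp
    rw [hfact, Matrix.det_mul, Matrix.det_fromBlocks_zero₂₁] at hdetG
    rw [isUnit_iff_ne_zero]
    intro h0
    apply hdetG
    rw [h0, mul_zero, mul_zero]
  -- the correction matrix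
  set T : Matrix (Fin n ⊕ Fin n) (Fin n ⊕ Fin n) ℂ := Matrix.fromBlocks 1 0 0 B⁻¹ with hT
  have hTinv : T⁻¹ = Matrix.fromBlocks 1 0 0 B := by
    apply Matrix.inv_eq_right_inv
    rw [hT, Matrix.fromBlocks_multiply]
    simp [Matrix.nonsing_inv_mul _ hBdet, ← Matrix.fromBlocks_one]
  refine ⟨Q * T, ?_, ?_⟩
  · -- symplectic
    have h1 : (Q * T)ᴴ * Jmat n * (Q * T) = Tᴴ * G * T := by
      rw [Matrix.conjTranspose_mul, hG]
      noncomm_ring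
    rw [h1, hGblocks, hT, Matrix.fromBlocks_conjTranspose, Matrix.fromBlocks_multiply,
      Matrix.fromBlocks_multiply]
    have hBB : B * B⁻¹ = 1 := Matrix.mul_nonsing_inv _ hBdet
    have hBH : (B⁻¹)ᴴ * (-Bᴴ) = -1 := by
      rw [Matrix.mul_neg, ← Matrix.conjTranspose_mul, hBB, Matrix.conjTranspose_one]
    simp only [Matrix.conjTranspose_zero, Matrix.conjTranspose_one, Matrix.one_mul,
      Matrix.mul_one, Matrix.zero_mul, Matrix.mul_zero, add_zero, zero_add, hBH, hBB]
    rw [Jmat]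
  · -- diagonalizes
    have h1 : (Q * T)⁻¹ * A * (Q * T) = T⁻¹ * Matrix.diagonal d' * T := by
      rw [Matrix.mul_inv_rev]
      calc T⁻¹ * Q⁻¹ * A * (Q * T) = T⁻¹ * Q⁻¹ * (A * Q) * T := by noncomm_ring
        _ = T⁻¹ * (Q⁻¹ * Q) * Matrix.diagonal d' * T := by rw [hQA]; noncomm_ring
        _ = T⁻¹ * Matrix.diagonal d' * T := by
            rw [Matrix.nonsing_inv_mul _ hQdet, mul_one]
    have h2 : Matrix.diagonal d' = Matrix.fromBlocks (Matrix.diagonal g) 0 0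
        (Matrix.diagonal (fun b => (starRingEnd ℂ) (g b))) := by
      rw [Matrix.fromBlocks_diagonal]
    rw [h1, hTinv, h2, hT, Matrix.fromBlocks_multiply, Matrix.fromBlocks_multiply]
    have h3 : B * Matrix.diagonal (fun b => (starRingEnd ℂ) (g b)) * B⁻¹
        = Matrix.diagonal (fun b => (starRingEnd ℂ) (g b)) := by
      rw [← hBd, Matrix.mul_assoc, Matrix.mul_nonsing_inv _ hBdet, Matrix.mul_one]
    simp only [Matrix.one_mul, Matrix.mul_one, Matrix.zero_mul, Matrix.mul_zero,
      add_zero, zero_add]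
    rw [h3, Matrix.fromBlocks_diagonal]
    exact Matrix.isDiag_diagonal _
end

section
/- A diagonalizable Hamiltonian matrix A ∈ M_{2n}(ℂ) with no purely imaginary eigenvalues (in particular 0 is not an eigenvalue) is symplectically diagonalizable, i.e. there exists a symplectic matrix S with S⁻¹AS diagonal. -/
open Matrix

lemma aux_card {ι : Type*} [Fintype ι] [DecidableEq ι] (M : Matrix ι ι ℂ)
    (hM : IsUnit M) (s t : Finset ι)
    (h : ∀ i ∈ s, ∀ j, j ∉ t → M i j = 0) : s.card ≤ t.card := by
  classical
  have hli : LinearIndependent ℂ (fun i : ι ↦ M i) :=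
    Matrix.linearIndependent_rows_iff_isUnit.mpr hM
  have hli2 : LinearIndependent ℂ (fun i : s ↦ M (i : ι)) :=
    hli.comp _ Subtype.val_injective
  set b : t → (ι → ℂ) := fun j ↦ Pi.single (j : ι) 1 with hb
  set W : Submodule ℂ (ι → ℂ) := Submodule.span ℂ (Set.range b) with hW
  have hmem : ∀ i : s, M (i : ι) ∈ W := by
    intro i
    have hrep : M (i : ι) = ∑ j ∈ t, M (i : ι) j • (Pi.single j 1 : ι → ℂ) := by
      funext k
      rw [Finset.sum_apply]
      by_cases hk : k ∈ t
      · rw [Finset.sum_eq_single k]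
        · simp
        · intro j hj hjk
          simp [Pi.single_eq_of_ne (Ne.symm hjk)]
        · intro hk'; exact absurd hk hk'
      · rw [h i i.2 k hk]
        refine (Finset.sum_eq_zero ?_).symm
        intro j hj
        have hkj : k ≠ j := fun e => hk (e ▸ hj)
        simp [Pi.single_eq_of_ne hkj]
    rw [hrep]
    refine Submodule.sum_mem _ ?_
    intro j hj
    exact Submodule.smul_mem _ _ (Submodule.subset_span ⟨⟨j, hj⟩, rfl⟩)
  haveI hfd : FiniteDimensional ℂ W :=
    FiniteDimensional.span_of_finite ℂ (Set.finite_range b)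
  have h1 : Fintype.card s ≤ Module.finrank ℂ W := by
    have hv : LinearIndependent ℂ (fun i : s ↦ (⟨M (i : ι), hmem i⟩ : W)) := by
      apply LinearIndependent.of_comp W.subtype
      exact hli2
    exact hv.fintype_card_le_finrank
  have h2 : Module.finrank ℂ W ≤ Fintype.card t := by
    simpa [Set.finrank] using finrank_range_le_card (R := ℂ) b
  simpa [Fintype.card_coe] using h1.trans h2

theorem stmt6 (n : ℕ) (A : Matrix (Fin n ⊕ Fin n) (Fin n ⊕ Fin n) ℂ)
    (hstruct : (Jmat n)ᵀ * Aᴴ * Jmat n = -A)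
    (hdiag : ∃ P : Matrix (Fin n ⊕ Fin n) (Fin n ⊕ Fin n) ℂ,
      IsUnit P.det ∧ (P⁻¹ * A * P).IsDiag)
    (hspec : ∀ μ ∈ spectrum ℂ A, μ.re ≠ 0) :
    ∃ S : Matrix (Fin n ⊕ Fin n) (Fin n ⊕ Fin n) ℂ,
      Sᴴ * Jmat n * S = Jmat n ∧ (S⁻¹ * A * S).IsDiag := by
  classical
  obtain ⟨P, hPdet, hPdiag⟩ := hdiag
  -- basic facts about J
  have hJt : (Jmat n)ᵀ = -(Jmat n) := by
    simp [Jmat, fromBlocks_transpose, fromBlocks_neg]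
  have hJH : (Jmat n)ᴴ = -(Jmat n) := by
    simp [Jmat, fromBlocks_conjTranspose, fromBlocks_neg]
  have hJJ : (Jmat n) * (Jmat n) = -1 := by
    have h : (-1 : Matrix (Fin n ⊕ Fin n) (Fin n ⊕ Fin n) ℂ) = fromBlocks (-1) 0 0 (-1) := by
      rw [← fromBlocks_one, fromBlocks_neg]; norm_num
    rw [h]
    simp [Jmat, fromBlocks_multiply]
  -- Hamiltonian relation: Aᴴ J = -(J A)
  have hA : Jmat n * Aᴴ * Jmat n = A := by
    rw [hJt] at hstruct
    have : -(Jmat n * Aᴴ * Jmat n) = -A := by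
      rw [← hstruct]; simp [Matrix.neg_mul]
    exact neg_inj.mp this
  have hAJ : Aᴴ * Jmat n = -(Jmat n * A) := by
    have h3 : Jmat n * (Jmat n * Aᴴ * Jmat n) = Jmat n * A := by rw [hA]
    rw [show Jmat n * (Jmat n * Aᴴ * Jmat n) = (Jmat n * Jmat n) * (Aᴴ * Jmat n) by
      simp only [Matrix.mul_assoc]] at h3
    rw [hJJ, neg_one_mul] at h3
    rw [← h3, neg_neg]
  -- P facts
  have hPl : P⁻¹ * P = 1 := nonsing_inv_mul P hPdet
  have hPr : P * P⁻¹ = 1 := mul_nonsing_inv P hPdet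
  set d : (Fin n ⊕ Fin n) → ℂ := (P⁻¹ * A * P).diag with hd_def
  have hDdiag : P⁻¹ * A * P = diagonal d := hPdiag.diagonal_diag.symm
  have hA' : A = P * diagonal d * P⁻¹ := by
    rw [← hDdiag, show P * (P⁻¹ * A * P) * P⁻¹ = (P * P⁻¹) * A * (P * P⁻¹) by
      simp only [Matrix.mul_assoc], hPr, Matrix.one_mul, Matrix.mul_one]
  -- each d i is in the spectrum of A
  have hdne : ∀ i, (d i).re ≠ 0 := by
    intro i
    apply hspec
    rw [spectrum.mem_iff]
    intro hu
    have halg : (algebraMap ℂ (Matrix (Fin n ⊕ Fin n) (Fin n ⊕ Fin n) ℂ)) (d i)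
        = (d i) • (1 : Matrix (Fin n ⊕ Fin n) (Fin n ⊕ Fin n) ℂ) :=
      Algebra.algebraMap_eq_smul_one _
    have hsub : (d i) • (1 : Matrix (Fin n ⊕ Fin n) (Fin n ⊕ Fin n) ℂ) - diagonal d
        = diagonal (fun j => d i - d j) := by
      ext a b
      by_cases hab : a = b <;>
        simp [Matrix.diagonal_apply, Matrix.one_apply, hab, Matrix.sub_apply]
    have hconj : (algebraMap ℂ (Matrix (Fin n ⊕ Fin n) (Fin n ⊕ Fin n) ℂ)) (d i) - A
        = P * ((d i) • (1 : Matrix (Fin n ⊕ Fin n) (Fin n ⊕ Fin n) ℂ) - diagonal d) * P⁻¹ := by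
      rw [halg, Matrix.mul_sub, Matrix.sub_mul]
      nth_rewrite 1 [hA']
      congr 1
      calc (d i) • (1 : Matrix (Fin n ⊕ Fin n) (Fin n ⊕ Fin n) ℂ)
          = (d i) • (P * P⁻¹) := by rw [hPr]
        _ = P * ((d i) • (1 : Matrix (Fin n ⊕ Fin n) (Fin n ⊕ Fin n) ℂ)) * P⁻¹ := by
            simp [mul_smul_comm, smul_mul_assoc]
    have hdet0 : ((algebraMap ℂ (Matrix (Fin n ⊕ Fin n) (Fin n ⊕ Fin n) ℂ)) (d i) - A).det = 0 := by
      rw [hconj, Matrix.det_mul, Matrix.det_mul]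
      have h1 : ((d i) • (1 : Matrix (Fin n ⊕ Fin n) (Fin n ⊕ Fin n) ℂ) - diagonal d).det = 0 := by
        rw [hsub, Matrix.det_diagonal]
        exact Finset.prod_eq_zero (Finset.mem_univ i) (by simp)
      rw [h1]; ring
    have := (Matrix.isUnit_iff_isUnit_det _).mp hu
    rw [hdet0] at this
    exact not_isUnit_zero this
  -- the form M
  set M : Matrix (Fin n ⊕ Fin n) (Fin n ⊕ Fin n) ℂ := Pᴴ * Jmat n * P with hM_def
  have hpp : (P⁻¹)ᴴ * Pᴴ = 1 := by
    rw [← conjTranspose_mul, hPr, conjTranspose_one]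
  have hMrel : (diagonal d)ᴴ * M + M * diagonal d = 0 := by
    have e1 : (diagonal d)ᴴ * M = Pᴴ * (Aᴴ * (Jmat n * P)) := by
      calc (diagonal d)ᴴ * M
          = Pᴴ * (Aᴴ * (((P⁻¹)ᴴ * Pᴴ) * (Jmat n * P))) := by
            rw [← hDdiag]; simp only [hM_def, conjTranspose_mul, Matrix.mul_assoc]
        _ = Pᴴ * (Aᴴ * (Jmat n * P)) := by rw [hpp, Matrix.one_mul]
    have e2 : M * diagonal d = Pᴴ * (Jmat n * (A * P)) := by
      calc M * diagonal d
          = Pᴴ * (Jmat n * ((P * P⁻¹) * (A * P))) := by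
            rw [← hDdiag]; simp only [hM_def, Matrix.mul_assoc]
        _ = Pᴴ * (Jmat n * (A * P)) := by rw [hPr, Matrix.one_mul]
    rw [e1, e2, ← Matrix.mul_add]
    have : Aᴴ * (Jmat n * P) + Jmat n * (A * P) = 0 := by
      rw [show Aᴴ * (Jmat n * P) = (Aᴴ * Jmat n) * P by rw [Matrix.mul_assoc],
        show Jmat n * (A * P) = (Jmat n * A) * P by rw [Matrix.mul_assoc], hAJ]
      simp [Matrix.neg_mul]
    rw [this, Matrix.mul_zero]
  have hrel : ∀ i j, (star (d i) + d j) * M i j = 0 := by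
    intro i j
    have h0 : ((diagonal d)ᴴ * M + M * diagonal d) i j = 0 := by rw [hMrel]; simp
    rw [Matrix.add_apply, Matrix.diagonal_conjTranspose, Matrix.diagonal_mul,
      Matrix.mul_diagonal] at h0
    calc (star (d i) + d j) * M i j = star d i * M i j + M i j * d j := by
          simp [Pi.star_apply]; ring
      _ = 0 := h0
  have hMH : Mᴴ = -M := by
    have h1 : Mᴴ = Pᴴ * (Jmat n)ᴴ * P := by
      simp only [hM_def, conjTranspose_mul, conjTranspose_conjTranspose, Matrix.mul_assoc]
    rw [h1, hJH]
    simp [Matrix.mul_neg, Matrix.neg_mul, hM_def, Matrix.mul_assoc]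
  have hJunit : IsUnit (Jmat n) := by
    rw [Matrix.isUnit_iff_isUnit_det]
    apply Matrix.isUnit_det_of_right_inverse (B := -(Jmat n))
    rw [Matrix.mul_neg, hJJ, neg_neg]
  have hMunit : IsUnit M := by
    rw [hM_def]
    exact (((Matrix.isUnit_iff_isUnit_det _).mpr (by
      rw [Matrix.det_conjTranspose]; exact hPdet.star)).mul hJunit).mul
      ((Matrix.isUnit_iff_isUnit_det _).mpr hPdet)
  -- vanishing of same-sign entries
  have hvan : ∀ i j, M i j ≠ 0 → (d j).re = -((d i).re) := by
    intro i j hM0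
    rcases mul_eq_zero.mp (hrel i j) with h | h
    · have := congrArg Complex.re h
      simp only [Complex.add_re, Complex.zero_re] at this
      have hsre : (star (d i)).re = (d i).re := by
        simp [Complex.star_def]
      rw [hsre] at this
      linarith
    · exact absurd h hM0
  -- sign sets
  set s : Finset (Fin n ⊕ Fin n) := Finset.univ.filter (fun i => 0 < (d i).re) with hs_def
  set t : Finset (Fin n ⊕ Fin n) := Finset.univ.filter (fun i => (d i).re < 0) with ht_def
  have hst : s.card ≤ t.card := by
    apply aux_card M hMunit
    intro i hi j hj
    by_contra hM0
    have hre := hvan i j hM0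
    have hipos : 0 < (d i).re := by
      rw [hs_def, Finset.mem_filter] at hi; exact hi.2
    have hjneg : (d j).re < 0 := by rw [hre]; linarith
    exact hj (by rw [ht_def, Finset.mem_filter]; exact ⟨Finset.mem_univ _, hjneg⟩)
  have hts : t.card ≤ s.card := by
    apply aux_card M hMunit
    intro i hi j hj
    by_contra hM0
    have hre := hvan i j hM0
    have hineg : (d i).re < 0 := by
      rw [ht_def, Finset.mem_filter] at hi; exact hi.2
    have hjpos : 0 < (d j).re := by rw [hre]; linarith
    exact hj (by rw [hs_def, Finset.mem_filter]; exact ⟨Finset.mem_univ _, hjpos⟩)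
  have ht' : t = Finset.univ.filter (fun i => ¬ 0 < (d i).re) := by
    rw [ht_def]
    ext i
    simp only [Finset.mem_filter, Finset.mem_univ, true_and]
    constructor
    · intro h; linarith
    · intro h
      rcases lt_or_gt_of_ne (hdne i) with h' | h'
      · exact h'
      · exact absurd h' h
  have hsum : s.card + t.card = n + n := by
    rw [ht', hs_def, Finset.card_filter_add_card_filter_not]
    simp
  have hs_card : s.card = n := by omega
  have ht_card : t.card = n := by omega
  have hcs : Fintype.card {i : Fin n ⊕ Fin n // 0 < (d i).re} = n := by
    rw [Fintype.card_subtype]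
    rw [← hs_def] -- might fail due to instances
    exact hs_card
  have hct : Fintype.card {i : Fin n ⊕ Fin n // ¬ 0 < (d i).re} = n := by
    rw [Fintype.card_subtype]
    rw [← ht']
    exact ht_card
  have e1 : {i : Fin n ⊕ Fin n // 0 < (d i).re} ≃ Fin n := Fintype.equivFinOfCardEq hcs
  have e2 : {i : Fin n ⊕ Fin n // ¬ 0 < (d i).re} ≃ Fin n := Fintype.equivFinOfCardEq hct
  set e : (Fin n ⊕ Fin n) ≃ (Fin n ⊕ Fin n) :=
    (Equiv.sumCongr e1.symm e2.symm).trans (Equiv.sumCompl (fun i => 0 < (d i).re)) with he_def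
  have hsign1 : ∀ i : Fin n, 0 < (d (e (Sum.inl i))).re := by
    intro i
    have h : e (Sum.inl i) = ((e1.symm i : {i : Fin n ⊕ Fin n // 0 < (d i).re}) : Fin n ⊕ Fin n) := by
      simp [he_def]
    rw [h]
    exact (e1.symm i).2
  have hsign2 : ∀ i : Fin n, (d (e (Sum.inr i))).re < 0 := by
    intro i
    have h : e (Sum.inr i) = ((e2.symm i : {i : Fin n ⊕ Fin n // ¬ 0 < (d i).re}) : Fin n ⊕ Fin n) := by
      simp [he_def]
    rw [h]
    rcases lt_or_gt_of_ne (hdne ((e2.symm i : {i : Fin n ⊕ Fin n // ¬ 0 < (d i).re}) : Fin n ⊕ Fin n)) with h' | h'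
    · exact h'
    · exact absurd h' (e2.symm i).2
  -- reindexed matrices
  set d' : (Fin n ⊕ Fin n) → ℂ := d ∘ ⇑e with hd'_def
  set P₂ : Matrix (Fin n ⊕ Fin n) (Fin n ⊕ Fin n) ℂ := P.submatrix id ⇑e with hP2_def
  set Pi2 : Matrix (Fin n ⊕ Fin n) (Fin n ⊕ Fin n) ℂ := P⁻¹.submatrix ⇑e id with hPi2_def
  have hP2r : P₂ * Pi2 = 1 := by
    rw [hP2_def, hPi2_def, submatrix_mul_equiv P P⁻¹ id e id, hPr, submatrix_id_id]
  have hP2l : Pi2 * P₂ = 1 := by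
    rw [hPi2_def, hP2_def]
    have h := submatrix_mul_equiv P⁻¹ P ⇑e (Equiv.refl (Fin n ⊕ Fin n)) ⇑e
    simp only [Equiv.coe_refl] at h
    rw [h, hPl, submatrix_one_equiv]
  have hsand : ∀ (U X V : Matrix (Fin n ⊕ Fin n) (Fin n ⊕ Fin n) ℂ),
      U.submatrix ⇑e id * X * V.submatrix id ⇑e = (U * X * V).submatrix ⇑e ⇑e := by
    intro U X V
    have h1 := submatrix_mul_equiv U X ⇑e (Equiv.refl (Fin n ⊕ Fin n)) (id : (Fin n ⊕ Fin n) → (Fin n ⊕ Fin n))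
    simp only [Equiv.coe_refl, submatrix_id_id] at h1
    rw [h1]
    have h2 := submatrix_mul_equiv (U * X) V ⇑e (Equiv.refl (Fin n ⊕ Fin n)) ⇑e
    simp only [Equiv.coe_refl] at h2
    rw [h2]
  set M' : Matrix (Fin n ⊕ Fin n) (Fin n ⊕ Fin n) ℂ := M.submatrix ⇑e ⇑e with hM'_def
  have hP2H : P₂ᴴ = Pᴴ.submatrix ⇑e id := by rw [hP2_def, conjTranspose_submatrix]
  have hM'eq : P₂ᴴ * (Jmat n) * P₂ = M' := by
    rw [hP2H, hP2_def, hsand, ← hM_def, hM'_def]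
  have hD'eq : Pi2 * A * P₂ = diagonal d' := by
    rw [hPi2_def, hP2_def, hsand, hDdiag]
    ext i j
    by_cases hij : i = j
    · simp [hij, Matrix.submatrix_apply, Matrix.diagonal_apply, hd'_def]
    · have hne : e i ≠ e j := fun h => hij (e.injective h)
      simp [Matrix.submatrix_apply, Matrix.diagonal_apply, hij, hne]
  have hrel' : ∀ i j, (star (d' i) + d' j) * M' i j = 0 := fun i j => hrel (e i) (e j)
  have hM'H : M'ᴴ = -M' := by
    rw [hM'_def, conjTranspose_submatrix, hMH]
    ext i j
    simp [Matrix.submatrix_apply]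
  have hM'det : IsUnit M'.det := by
    rw [hM'_def, det_submatrix_equiv_self]
    exact (Matrix.isUnit_iff_isUnit_det M).mp hMunit
  have hd'1 : ∀ i : Fin n, 0 < (d' (Sum.inl i)).re := fun i => hsign1 i
  have hd'2 : ∀ i : Fin n, (d' (Sum.inr i)).re < 0 := fun i => hsign2 i
  have hple : ∀ (z w : ℂ), z.re + w.re ≠ 0 → star z + w ≠ 0 := by
    intro z w hne h
    apply hne
    have := congrArg Complex.re h
    simpa [Complex.add_re, Complex.star_def] using this
  set B : Matrix (Fin n) (Fin n) ℂ := Matrix.of (fun i j => M' (Sum.inl i) (Sum.inr j)) with hB_def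
  have hB11 : ∀ i j, M' (Sum.inl i) (Sum.inl j) = 0 := by
    intro i j
    rcases mul_eq_zero.mp (hrel' (Sum.inl i) (Sum.inl j)) with h | h
    · exact absurd h (hple _ _ (by have := hd'1 i; have := hd'1 j; intro hc; linarith))
    · exact h
  have hB22 : ∀ i j, M' (Sum.inr i) (Sum.inr j) = 0 := by
    intro i j
    rcases mul_eq_zero.mp (hrel' (Sum.inr i) (Sum.inr j)) with h | h
    · exact absurd h (hple _ _ (by have := hd'2 i; have := hd'2 j; intro hc; linarith))
    · exact h
  have hB21 : ∀ i j, M' (Sum.inr i) (Sum.inl j) = -(star (B j i)) := by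
    intro i j
    have h := congrFun (congrFun hM'H (Sum.inr i)) (Sum.inl j)
    have h' : star (M' (Sum.inl j) (Sum.inr i)) = -(M' (Sum.inr i) (Sum.inl j)) := by
      simpa [Matrix.conjTranspose_apply, Matrix.neg_apply] using h
    have hBji : B j i = M' (Sum.inl j) (Sum.inr i) := rfl
    rw [hBji, h', neg_neg]
  have hM'blocks : M' = fromBlocks 0 B (-Bᴴ) 0 := by
    ext i j
    cases i with
    | inl i =>
      cases j with
      | inl j => simpa using hB11 i j
      | inr j => simp [hB_def]
    | inr i =>
      cases j with
      | inl j =>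
        simpa [Matrix.conjTranspose_apply, Matrix.neg_apply] using hB21 i j
      | inr j => simpa using hB22 i j
  have hM'invl : M'⁻¹ * M' = 1 := nonsing_inv_mul M' hM'det
  have hM'invr : M' * M'⁻¹ = 1 := mul_nonsing_inv M' hM'det
  set C : Matrix (Fin n) (Fin n) ℂ := Matrix.of (fun i j => M'⁻¹ (Sum.inr i) (Sum.inl j)) with hC_def
  have hBC : B * C = 1 := by
    ext i j
    have h2 : (M' * M'⁻¹) (Sum.inl i) (Sum.inl j) = (1 : Matrix (Fin n ⊕ Fin n) (Fin n ⊕ Fin n) ℂ) (Sum.inl i) (Sum.inl j) := by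
      rw [hM'invr]
    rw [Matrix.mul_apply, Fintype.sum_sum_type] at h2
    simp only [hB11, zero_mul, Finset.sum_const_zero, zero_add] at h2
    rw [Matrix.mul_apply]
    rw [show ((1 : Matrix (Fin n) (Fin n) ℂ) i j) = ((1 : Matrix (Fin n ⊕ Fin n) (Fin n ⊕ Fin n) ℂ) (Sum.inl i) (Sum.inl j)) by
      simp [Matrix.one_apply]]
    rw [← h2]
    rfl
  have hCB : C * B = 1 := by
    ext i j
    have h2 : (M'⁻¹ * M') (Sum.inr i) (Sum.inr j) = (1 : Matrix (Fin n ⊕ Fin n) (Fin n ⊕ Fin n) ℂ) (Sum.inr i) (Sum.inr j) := by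
      rw [hM'invl]
    rw [Matrix.mul_apply, Fintype.sum_sum_type] at h2
    simp only [hB22, mul_zero, Finset.sum_const_zero, add_zero] at h2
    rw [Matrix.mul_apply]
    rw [show ((1 : Matrix (Fin n) (Fin n) ℂ) i j) = ((1 : Matrix (Fin n ⊕ Fin n) (Fin n ⊕ Fin n) ℂ) (Sum.inr i) (Sum.inr j)) by
      simp [Matrix.one_apply]]
    rw [← h2]
    rfl
  -- assembling S
  set Q : Matrix (Fin n ⊕ Fin n) (Fin n ⊕ Fin n) ℂ := fromBlocks 1 0 0 C with hQ_def
  set Qi : Matrix (Fin n ⊕ Fin n) (Fin n ⊕ Fin n) ℂ := fromBlocks 1 0 0 B with hQi_def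
  have hQQi : Q * Qi = 1 := by
    rw [hQ_def, hQi_def, fromBlocks_multiply]
    simp [hCB, ← fromBlocks_one]
  have hQiQ : Qi * Q = 1 := by
    rw [hQ_def, hQi_def, fromBlocks_multiply]
    simp [hBC, ← fromBlocks_one]
  refine ⟨P₂ * Q, ?_, ?_⟩
  · -- symplectic
    have hstep : (P₂ * Q)ᴴ * Jmat n * (P₂ * Q) = Qᴴ * ((P₂ᴴ * Jmat n * P₂) * Q) := by
      simp only [conjTranspose_mul, Matrix.mul_assoc]
    rw [hstep, hM'eq, hM'blocks, hQ_def]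
    have hCBH : Cᴴ * Bᴴ = 1 := by rw [← conjTranspose_mul, hBC, conjTranspose_one]
    rw [fromBlocks_conjTranspose, fromBlocks_multiply, fromBlocks_multiply]
    rw [show Jmat n = fromBlocks 0 1 (-1) 0 from rfl]
    simp
    exact ⟨hBC, hCBH⟩
  · -- diagonal
    have hSr : (P₂ * Q) * (Qi * Pi2) = 1 := by
      calc (P₂ * Q) * (Qi * Pi2) = P₂ * ((Q * Qi) * Pi2) := by simp only [Matrix.mul_assoc]
        _ = 1 := by rw [hQQi, Matrix.one_mul, hP2r]
    have hSinv : (P₂ * Q)⁻¹ = Qi * Pi2 := inv_eq_right_inv hSr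
    rw [hSinv]
    have hstep2 : (Qi * Pi2) * A * (P₂ * Q) = Qi * ((Pi2 * A * P₂) * Q) := by
      simp only [Matrix.mul_assoc]
    rw [hstep2, hD'eq]
    set d1 : Fin n → ℂ := fun i => d' (Sum.inl i) with hd1_def
    set d2 : Fin n → ℂ := fun i => d' (Sum.inr i) with hd2_def
    have hdd : diagonal d' = fromBlocks (diagonal d1) 0 0 (diagonal d2) := by
      ext i j
      cases i <;> cases j <;>
        simp [Matrix.diagonal_apply, hd1_def, hd2_def, Sum.inl.injEq, Sum.inr.injEq]
    rw [hQi_def, hQ_def, hdd, fromBlocks_multiply, fromBlocks_multiply]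
    have hkey : B * diagonal d2 = diagonal (fun i => -(star (d1 i))) * B := by
      ext i j
      rw [Matrix.mul_diagonal, Matrix.diagonal_mul]
      by_cases hBij : B i j = 0
      · simp [hBij]
      · have h := hrel' (Sum.inl i) (Sum.inr j)
        have hBij' : M' (Sum.inl i) (Sum.inr j) = B i j := rfl
        rw [hBij'] at h
        rcases mul_eq_zero.mp h with h | h
        · have hz : d2 j = -(star (d1 i)) := by
            have : star (d1 i) + d2 j = 0 := h
            linear_combination this
          rw [hz]; ring
        · exact absurd h hBij
    have hBDC : B * diagonal d2 * C = diagonal (fun i => -(star (d1 i))) := by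
      rw [hkey, Matrix.mul_assoc, hBC, Matrix.mul_one]
    simp only [Matrix.one_mul, Matrix.mul_one, Matrix.zero_mul, Matrix.mul_zero,
      add_zero, zero_add]
    rw [← Matrix.mul_assoc, hBDC]
    exact Matrix.IsDiag.fromBlocks (Matrix.isDiag_diagonal d1)
      (Matrix.isDiag_diagonal (fun i => -(star (d1 i))))
end

section
/- A diagonalizable per-Hermitian matrix A ∈ M_{2n}(ℂ) with no real eigenvalues is perplectically diagonalizable, i.e. there exists a perplectic matrix P (PᴴR_{2n}P = R_{2n}) such that P⁻¹AP is diagonal. -/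
open Matrix

/-- The `n × n` reversal (anti-identity) matrix. -/
def Rrev (n : ℕ) : Matrix (Fin n) (Fin n) ℂ :=
  Matrix.of fun i j => if j = i.rev then 1 else 0

/-- The `2n × 2n` reversal (anti-identity) matrix, in block form. -/
def R2 (n : ℕ) : Matrix (Fin n ⊕ Fin n) (Fin n ⊕ Fin n) ℂ :=
  Matrix.fromBlocks 0 (Rrev n) (Rrev n) 0

lemma Rrev_mul_apply {n : ℕ} (X : Matrix (Fin n) (Fin n) ℂ) (i j : Fin n) :
    (Rrev n * X) i j = X i.rev j := by
  simp [Rrev, mul_apply]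

lemma mul_Rrev_apply {n : ℕ} (X : Matrix (Fin n) (Fin n) ℂ) (i j : Fin n) :
    (X * Rrev n) i j = X i j.rev := by
  have h : ∀ k : Fin n, (j = k.rev) ↔ (k = j.rev) := by
    intro k; constructor <;> rintro rfl <;> simp [Fin.rev_rev]
  simp only [Rrev, mul_apply, of_apply]
  calc ∑ k, X i k * (if j = k.rev then (1:ℂ) else 0)
      = ∑ k, X i k * (if k = j.rev then (1:ℂ) else 0) :=
        Finset.sum_congr rfl (fun k _ => by rw [if_congr (h k) rfl rfl])
    _ = X i j.rev := by simp

lemma Rrev_mul_Rrev (n : ℕ) : Rrev n * Rrev n = 1 := by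
  ext i j
  rw [Rrev_mul_apply]
  simp [Rrev, one_apply, Fin.rev_eq_iff, eq_comm]

lemma Rrev_conjTranspose (n : ℕ) : (Rrev n)ᴴ = Rrev n := by
  ext i j
  simp [Rrev, conjTranspose_apply, Fin.rev_eq_iff, eq_comm]
  split <;> split <;> simp_all [Fin.rev_eq_iff, eq_comm]

lemma R2_conjTranspose (n : ℕ) : (R2 n)ᴴ = R2 n := by
  simp [R2, fromBlocks_conjTranspose, Rrev_conjTranspose]

lemma R2_mul_R2 (n : ℕ) : R2 n * R2 n = 1 := by
  simp [R2, fromBlocks_multiply, Rrev_mul_Rrev, fromBlocks_one]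

lemma Rrev_diag {n : ℕ} (v : Fin n → ℂ) :
    Rrev n * Matrix.diagonal v * Rrev n = Matrix.diagonal (fun i => v i.rev) := by
  ext i j
  rw [mul_Rrev_apply, Rrev_mul_apply]
  by_cases h : i = j
  · subst h; simp
  · rw [diagonal_apply_ne _ h, diagonal_apply_ne]
    exact fun hc => h (by simpa using congrArg Fin.rev hc)

lemma key_lemma (n : ℕ) (A Q : Matrix (Fin n ⊕ Fin n) (Fin n ⊕ Fin n) ℂ) (d : (Fin n ⊕ Fin n) → ℂ)
    (hQ : IsUnit Q.det)
    (hA : A = Q * Matrix.diagonal d * Q⁻¹)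
    (hM : ∀ i j, (Qᴴ * R2 n * Q) i j ≠ 0 → d j = star (d i))
    (h1 : ∀ a, 0 < (d (Sum.inl a)).im) (h2 : ∀ a, (d (Sum.inr a)).im < 0) :
    ∃ P : Matrix (Fin n ⊕ Fin n) (Fin n ⊕ Fin n) ℂ,
      Pᴴ * R2 n * P = R2 n ∧ (P⁻¹ * A * P).IsDiag := by
  set M := Qᴴ * R2 n * Q with hMdef
  have hMH : Mᴴ = M := by
    rw [hMdef, conjTranspose_mul, conjTranspose_mul, conjTranspose_conjTranspose,
      R2_conjTranspose, Matrix.mul_assoc]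
  have hR2det : IsUnit (R2 n).det := by
    apply IsUnit.of_mul_eq_one (R2 n).det
    rw [← det_mul, R2_mul_R2, det_one]
  have hMdet : IsUnit M.det := by
    rw [hMdef, det_mul, det_mul, det_conjTranspose]
    exact ((hQ.star.mul hR2det).mul hQ)
  set E : Matrix (Fin n) (Fin n) ℂ := Matrix.of fun a b => M (Sum.inl a) (Sum.inr b) with hEdef
  have him : ∀ i j, (d j).im ≠ -(d i).im → M i j = 0 := by
    intro i j hij
    by_contra h
    exact hij (by rw [hM i j h, Complex.star_def, Complex.conj_im])
  have hblk : M = fromBlocks 0 E Eᴴ 0 := by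
    ext i j
    cases i with
    | inl a =>
      cases j with
      | inl b =>
        show M _ _ = 0
        exact him _ _ (by have := h1 a; have := h1 b; intro hc; rw [hc] at this; linarith)
      | inr b => rfl
    | inr a =>
      cases j with
      | inl b =>
        show M _ _ = Eᴴ a b
        rw [← hMH]
        rfl
      | inr b =>
        show M _ _ = 0
        exact him _ _ (by have := h2 a; have := h2 b; intro hc; rw [hc] at this; linarith)
  have hJ : (fromBlocks 0 (1 : Matrix (Fin n) (Fin n) ℂ) 1 0) *
      (fromBlocks Eᴴ 0 0 E) = fromBlocks 0 E Eᴴ 0 := by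
    rw [fromBlocks_multiply]
    simp
  have hE : IsUnit E.det := by
    have := hMdet
    rw [hblk, ← hJ, det_mul, det_fromBlocks_zero₂₁, det_conjTranspose] at this
    rw [IsUnit.mul_iff, IsUnit.mul_iff] at this
    exact this.2.2
  set C : Matrix (Fin n) (Fin n) ℂ := E⁻¹ * Rrev n with hCdef
  set S := fromBlocks (1 : Matrix (Fin n) (Fin n) ℂ) 0 0 C with hSdef
  set Sinv := fromBlocks (1 : Matrix (Fin n) (Fin n) ℂ) 0 0 (Rrev n * E) with hSinvdef
  have hSS : S * Sinv = 1 := by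
    rw [hSdef, hSinvdef, fromBlocks_multiply]
    have : C * (Rrev n * E) = 1 := by
      rw [hCdef, Matrix.mul_assoc, ← Matrix.mul_assoc (Rrev n), Rrev_mul_Rrev, Matrix.one_mul,
        Matrix.nonsing_inv_mul _ hE]
    simp [this, fromBlocks_one]
  have hSinvS : Sinv * S = 1 := by
    rw [hSdef, hSinvdef, fromBlocks_multiply]
    have : Rrev n * E * C = 1 := by
      rw [hCdef, Matrix.mul_assoc, ← Matrix.mul_assoc E, Matrix.mul_nonsing_inv _ hE,
        Matrix.one_mul, Rrev_mul_Rrev]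
    simp [this, fromBlocks_one]
  have hSinv : S⁻¹ = Sinv := Matrix.inv_eq_right_inv hSS
  have hEC : E * C = Rrev n := by
    rw [hCdef, ← Matrix.mul_assoc, Matrix.mul_nonsing_inv _ hE, Matrix.one_mul]
  refine ⟨Q * S, ?_, ?_⟩
  · have : (Q * S)ᴴ * R2 n * (Q * S) = Sᴴ * M * S := by
      rw [hMdef, conjTranspose_mul]
      noncomm_ring
    rw [this, hblk, hSdef, fromBlocks_conjTranspose, fromBlocks_multiply, fromBlocks_multiply]
    have hCE : Cᴴ * Eᴴ = Rrev n := by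
      rw [← conjTranspose_mul, hEC, Rrev_conjTranspose]
    simp [hEC, hCE, R2]
  · have hQQ : Q * Q⁻¹ = 1 := Matrix.mul_nonsing_inv _ hQ
    have hQQ' : Q⁻¹ * Q = 1 := Matrix.nonsing_inv_mul _ hQ
    have hPinv : (Q * S)⁻¹ = Sinv * Q⁻¹ := by
      apply Matrix.inv_eq_right_inv
      rw [Matrix.mul_assoc, ← Matrix.mul_assoc S, hSS, Matrix.one_mul, hQQ]
    rw [hPinv, hA]
    have : Sinv * Q⁻¹ * (Q * Matrix.diagonal d * Q⁻¹) * (Q * S)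
        = Sinv * Matrix.diagonal d * S := by
      calc Sinv * Q⁻¹ * (Q * Matrix.diagonal d * Q⁻¹) * (Q * S)
          = Sinv * (Q⁻¹ * Q) * Matrix.diagonal d * (Q⁻¹ * Q) * S := by noncomm_ring
        _ = Sinv * Matrix.diagonal d * S := by rw [hQQ']; simp [Matrix.mul_assoc]
    rw [this]
    have hdiagblk : Matrix.diagonal d =
        fromBlocks (Matrix.diagonal (fun a => d (Sum.inl a))) 0 0
          (Matrix.diagonal (fun a => d (Sum.inr a))) := by
      ext i j
      cases i <;> cases j <;>
        simp [Matrix.diagonal, fromBlocks]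
    have hED : E * Matrix.diagonal (fun a => d (Sum.inr a)) =
        Matrix.diagonal (fun a => star (d (Sum.inl a))) * E := by
      ext a b
      rw [diagonal_mul, mul_diagonal]
      by_cases h : E a b = 0
      · rw [h, zero_mul, mul_zero]
      · rw [hM (Sum.inl a) (Sum.inr b) h, mul_comm]
    have hblk22 : Rrev n * E * Matrix.diagonal (fun a => d (Sum.inr a)) * C =
        Matrix.diagonal (fun a => star (d (Sum.inl a.rev))) := by
      calc Rrev n * E * Matrix.diagonal (fun a => d (Sum.inr a)) * C
          = Rrev n * (E * Matrix.diagonal (fun a => d (Sum.inr a))) * (E⁻¹ * Rrev n) := by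
            rw [hCdef]; noncomm_ring
        _ = Rrev n * (Matrix.diagonal (fun a => star (d (Sum.inl a))) * E) * (E⁻¹ * Rrev n) := by
            rw [hED]
        _ = Rrev n * Matrix.diagonal (fun a => star (d (Sum.inl a))) * (E * E⁻¹) * Rrev n := by
            noncomm_ring
        _ = Rrev n * Matrix.diagonal (fun a => star (d (Sum.inl a))) * Rrev n := by
            rw [Matrix.mul_nonsing_inv _ hE, Matrix.mul_one]
        _ = Matrix.diagonal (fun a => star (d (Sum.inl a.rev))) := Rrev_diag _
    rw [hdiagblk, hSdef, hSinvdef, fromBlocks_multiply, fromBlocks_multiply]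
    simp only [Matrix.one_mul, Matrix.mul_one, Matrix.zero_mul, Matrix.mul_zero, add_zero,
      zero_add, Matrix.mul_assoc]
    rw [show Rrev n * (E * (Matrix.diagonal (fun a => d (Sum.inr a)) * C)) =
        Matrix.diagonal (fun a => star (d (Sum.inl a.rev))) from by rw [← hblk22]; noncomm_ring]
    exact Matrix.IsDiag.fromBlocks (Matrix.isDiag_diagonal _) (Matrix.isDiag_diagonal _)

lemma card_le_aux {I : Type*} [Fintype I] [DecidableEq I] (M : Matrix I I ℂ) (hM : IsUnit M.det)
    (p : I → Prop) [DecidablePred p] (h : ∀ i j, p i → p j → M i j = 0) :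
    Fintype.card {i // p i} ≤ Fintype.card {i // ¬ p i} := by
  have hli : LinearIndependent ℂ (fun (i : {i // p i}) => (fun j : {j // ¬ p j} => M i.1 j.1)) := by
    rw [Fintype.linearIndependent_iff]
    intro g hg i₀
    classical
    set c : I → ℂ := fun i => if hi : p i then g ⟨i, hi⟩ else 0 with hc_def
    have hc : c ᵥ* M = 0 := by
      funext j
      by_cases hj : p j
      · simp only [vecMul, dotProduct]
        apply Finset.sum_eq_zero
        intro i _
        by_cases hi : p i
        · rw [h i j hi hj, mul_zero]
        · simp [hc_def, hi]
      · have h0 := congrFun hg ⟨j, hj⟩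
        simp only [Finset.sum_apply, Pi.smul_apply, smul_eq_mul, Pi.zero_apply] at h0
        simp only [vecMul, dotProduct, Pi.zero_apply]
        rw [← Fintype.sum_subtype_add_sum_subtype p (fun i => c i * M i j)]
        have h1 : ∑ i : {i // p i}, c i.1 * M i.1 j = 0 := by
          rw [← h0]
          exact Finset.sum_congr rfl (fun i _ => by simp [hc_def, i.2])
        have h2 : ∑ i : {i // ¬ p i}, c i.1 * M i.1 j = 0 :=
          Finset.sum_eq_zero (fun i _ => by simp [hc_def, i.2])
        rw [h1, h2, add_zero]
    have hc0 : c = 0 := by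
      have h2 : (c ᵥ* M) ᵥ* M⁻¹ = 0 := by rw [hc, Matrix.zero_vecMul]
      rwa [Matrix.vecMul_vecMul, Matrix.mul_nonsing_inv _ hM, Matrix.vecMul_one] at h2
    have := congrFun hc0 i₀.1
    simpa [hc_def, i₀.2] using this
  have := hli.fintype_card_le_finrank
  rwa [Module.finrank_fintype_fun_eq_card] at this

theorem stmt7 (n : ℕ) (A : Matrix (Fin n ⊕ Fin n) (Fin n ⊕ Fin n) ℂ)
    (hstruct : R2 n * Aᴴ * R2 n = A)
    (hdiag : ∃ Q : Matrix (Fin n ⊕ Fin n) (Fin n ⊕ Fin n) ℂ,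
      IsUnit Q.det ∧ (Q⁻¹ * A * Q).IsDiag)
    (hspec : ∀ μ ∈ spectrum ℂ A, μ.im ≠ 0) :
    ∃ P : Matrix (Fin n ⊕ Fin n) (Fin n ⊕ Fin n) ℂ,
      Pᴴ * R2 n * P = R2 n ∧ (P⁻¹ * A * P).IsDiag := by
  classical
  obtain ⟨Q, hQ, hD⟩ := hdiag
  have hQQ : Q * Q⁻¹ = 1 := Matrix.mul_nonsing_inv _ hQ
  have hQQ' : Q⁻¹ * Q = 1 := Matrix.nonsing_inv_mul _ hQ
  set d : (Fin n ⊕ Fin n) → ℂ := fun i => (Q⁻¹ * A * Q) i i with hd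
  have hDd : Q⁻¹ * A * Q = Matrix.diagonal d := by
    ext i j
    by_cases h : i = j
    · subst h; simp [hd]
    · rw [diagonal_apply_ne _ h]; exact hD h
  have hA : A = Q * Matrix.diagonal d * Q⁻¹ := by
    rw [← hDd]
    calc A = (Q * Q⁻¹) * A * (Q * Q⁻¹) := by rw [hQQ]; simp
      _ = Q * (Q⁻¹ * A * Q) * Q⁻¹ := by simp only [Matrix.mul_assoc]
  -- each d i is in the spectrum, hence has nonzero imaginary part
  have hspec' : ∀ i, (d i).im ≠ 0 := by
    intro i
    apply hspec
    rw [spectrum.mem_iff]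
    intro hu
    rw [Matrix.isUnit_iff_isUnit_det] at hu
    have hconj : (algebraMap ℂ (Matrix (Fin n ⊕ Fin n) (Fin n ⊕ Fin n) ℂ) (d i)) - A
        = Q * (Matrix.diagonal (fun j => d i - d j)) * Q⁻¹ := by
      rw [hA]
      have h1 : Matrix.diagonal (fun _ : (Fin n ⊕ Fin n) => d i)
          = Q * Matrix.diagonal (fun _ : (Fin n ⊕ Fin n) => d i) * Q⁻¹ := by
        have : Matrix.diagonal (fun _ : (Fin n ⊕ Fin n) => d i) = (d i) • 1 := by
          simp [Matrix.smul_one_eq_diagonal]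
        rw [this]
        rw [Matrix.mul_smul, Matrix.smul_mul, Matrix.mul_one, hQQ]
      rw [algebraMap_eq_diagonal]
      have h2 : Matrix.diagonal ((algebraMap ℂ ((Fin n ⊕ Fin n) → ℂ)) (d i))
          = Matrix.diagonal (fun _ : (Fin n ⊕ Fin n) => d i) := by
        congr 1
      rw [h2, h1, ← Matrix.sub_mul, ← Matrix.mul_sub, Matrix.diagonal_sub]
    rw [hconj, det_conj ((Matrix.isUnit_iff_isUnit_det _).mpr hQ), det_diagonal] at hu
    have hz : (∏ j : Fin n ⊕ Fin n, (d i - d j)) = 0 :=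
      Finset.prod_eq_zero (Finset.mem_univ i) (sub_self (d i))
    rw [hz] at hu
    exact not_isUnit_zero hu
  -- the pairing condition
  set M := Qᴴ * R2 n * Q with hMdef
  have hstar : ∀ i j, M i j ≠ 0 → d j = star (d i) := by
    have hcomm : Matrix.diagonal (fun i => star (d i)) * M = M * Matrix.diagonal d := by
      have hAH : Aᴴ * R2 n = R2 n * A := by
        have := congrArg (fun X => R2 n * X) hstruct
        simpa [← Matrix.mul_assoc, R2_mul_R2, Matrix.one_mul] using this
      have hAH2 : Aᴴ = Q⁻¹ᴴ * Matrix.diagonal (fun i => star (d i)) * Qᴴ := by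
        rw [hA, conjTranspose_mul, conjTranspose_mul, diagonal_conjTranspose]
        have : (star d) = fun i => star (d i) := rfl
        rw [← Matrix.mul_assoc]
        rfl
      have h3 := congrArg (fun X => Qᴴ * X * Q) hAH
      calc Matrix.diagonal (fun i => star (d i)) * M
          = (Qᴴ * Q⁻¹ᴴ) * Matrix.diagonal (fun i => star (d i)) * (Qᴴ * R2 n * Q) := by
            have h4 : Qᴴ * Q⁻¹ᴴ = 1 := by
              rw [← conjTranspose_mul, hQQ', conjTranspose_one]
            rw [h4, Matrix.one_mul, hMdef]
        _ = Qᴴ * (Aᴴ * R2 n) * Q := by rw [hAH2]; simp only [Matrix.mul_assoc]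
        _ = Qᴴ * (R2 n * A) * Q := by rw [hAH]
        _ = (Qᴴ * R2 n * Q) * Matrix.diagonal d * (Q⁻¹ * Q) := by
            rw [hA]; simp only [Matrix.mul_assoc]
        _ = M * Matrix.diagonal d := by rw [hQQ', Matrix.mul_one, hMdef]
    intro i j hij
    have := congrFun (congrFun hcomm i) j
    rw [Matrix.diagonal_mul, Matrix.mul_diagonal] at this
    rw [mul_comm (star (d i))] at this
    exact (mul_left_cancel₀ hij this).symm
  -- M vanishes on same-sign pairs
  set p : (Fin n ⊕ Fin n) → Prop := fun i => 0 < (d i).im with hp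
  have hnotp : ∀ i, ¬ p i ↔ (d i).im < 0 := by
    intro i
    rw [hp]
    simp only [not_lt]
    constructor
    · intro h; exact lt_of_le_of_ne h (hspec' i)
    · intro h; exact le_of_lt h
  have hzero : ∀ i j, p i → p j → M i j = 0 := by
    intro i j hi hj
    by_contra h
    have := hstar i j h
    have h2 : (d j).im = -(d i).im := by rw [this, Complex.star_def, Complex.conj_im]
    rw [hp] at hi hj
    rw [h2] at hj; linarith
  have hzero' : ∀ i j, ¬ p i → ¬ p j → M i j = 0 := by
    intro i j hi hj
    by_contra h
    have := hstar i j h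
    have h2 : (d j).im = -(d i).im := by rw [this, Complex.star_def, Complex.conj_im]
    rw [hnotp] at hi hj
    rw [h2] at hj; linarith
  have hMdet : IsUnit M.det := by
    have hR2det : IsUnit (R2 n).det := by
      apply IsUnit.of_mul_eq_one (R2 n).det
      rw [← det_mul, R2_mul_R2, det_one]
    rw [hMdef, det_mul, det_mul, det_conjTranspose]
    exact ((hQ.star.mul hR2det).mul hQ)
  -- cardinality
  have hcard1 : Fintype.card {i // p i} ≤ Fintype.card {i // ¬ p i} :=
    card_le_aux M hMdet p hzero
  have hcard2 : Fintype.card {i // ¬ p i} ≤ Fintype.card {i // p i} := by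
    have := card_le_aux M hMdet (fun i => ¬ p i) hzero'
    refine this.trans (le_of_eq (Fintype.card_congr ?_))
    exact Equiv.subtypeEquivRight (fun i => not_not)
  have hsum : Fintype.card {i // p i} + Fintype.card {i // ¬ p i} = n + n := by
    rw [← Fintype.card_sum]
    rw [Fintype.card_congr (Equiv.sumCompl p)]
    simp
  have hcardP : Fintype.card {i // p i} = n := by omega
  have hcardN : Fintype.card {i // ¬ p i} = n := by omega
  -- build the permutation
  let eP : Fin n ≃ {i // p i} := (Fintype.equivFinOfCardEq hcardP).symm
  let eN : Fin n ≃ {i // ¬ p i} := (Fintype.equivFinOfCardEq hcardN).symm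
  let π : (Fin n ⊕ Fin n) ≃ (Fin n ⊕ Fin n) :=
    (Equiv.sumCongr eP eN).trans (Equiv.sumCompl p)
  have hπl : ∀ a : Fin n, p (π (Sum.inl a)) := by
    intro a
    show p ((Equiv.sumCompl p) (Sum.inl (eP a)))
    rw [Equiv.sumCompl_apply_inl]
    exact (eP a).2
  have hπr : ∀ a : Fin n, ¬ p (π (Sum.inr a)) := by
    intro a
    show ¬ p ((Equiv.sumCompl p) (Sum.inr (eN a)))
    rw [Equiv.sumCompl_apply_inr]
    exact (eN a).2
  -- permuted matrix
  set Q' := Q.submatrix id ⇑π with hQ'def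
  have hQ'inv : Q' * Q⁻¹.submatrix ⇑π id = 1 := by
    rw [hQ'def, submatrix_mul_equiv, hQQ, Matrix.submatrix_id_id]
  have hQ'det : IsUnit Q'.det := by
    apply IsUnit.of_mul_eq_one (Q⁻¹.submatrix ⇑π id).det
    rw [← det_mul, hQ'inv, det_one]
  have hQ'inv' : Q'⁻¹ = Q⁻¹.submatrix ⇑π id := Matrix.inv_eq_right_inv hQ'inv
  have hA' : A = Q' * Matrix.diagonal (fun i => d (π i)) * Q'⁻¹ := by
    rw [hQ'inv', hQ'def]
    have h1 : Matrix.diagonal (fun i => d (π i)) = (Matrix.diagonal d).submatrix ⇑π ⇑π := by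
      rw [submatrix_diagonal_equiv]
      rfl
    rw [h1, submatrix_mul_equiv, submatrix_mul_equiv, submatrix_id_id, hA]
  have hM' : ∀ i j, (Q'ᴴ * R2 n * Q') i j ≠ 0 → d (π j) = star (d (π i)) := by
    have hMsub : Q'ᴴ * R2 n * Q' = M.submatrix ⇑π ⇑π := by
      rw [hQ'def, conjTranspose_submatrix, hMdef]
      have e1 : (Qᴴ * R2 n * Q).submatrix ⇑π ⇑π
          = (Qᴴ * R2 n).submatrix ⇑π id * Q.submatrix id ⇑π :=
        Matrix.submatrix_mul _ _ _ _ _ Function.bijective_id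
      have e2 : (Qᴴ * R2 n).submatrix ⇑π id
          = Qᴴ.submatrix ⇑π id * (R2 n).submatrix id id :=
        Matrix.submatrix_mul _ _ _ _ _ Function.bijective_id
      rw [e1, e2, Matrix.submatrix_id_id]
    intro i j h
    rw [hMsub] at h
    exact hstar _ _ h
  exact key_lemma n A Q' (fun i => d (π i)) hQ'det hA' hM'
    (fun a => by have := hπl a; rwa [hp] at this)
    (fun a => by have := hπr a; rwa [hnotp] at this)
end

section
/- A diagonalizable perskew-Hermitian matrix A ∈ M_{2n}(ℂ) with no purely imaginary eigenvalues is perplectically diagonalizable. -/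
open Matrix

lemma Rrev_symm (n : ℕ) (i j : Fin n) : Rrev n i j = Rrev n j i := by
  simp only [Rrev, Matrix.of_apply]
  rcases eq_or_ne j i.rev with h | h
  · subst h; simp
  · rw [if_neg h, if_neg]
    intro hc
    exact h (by rw [hc, Fin.rev_rev])

lemma R2_det_isUnit (n : ℕ) : IsUnit (R2 n).det :=
  Matrix.isUnit_det_of_right_inverse (R2_mul_R2 n)

set_option linter.unusedSectionVars false

noncomputable section

variable {ι : Type} [Fintype ι] [DecidableEq ι]

/-- The sesquilinear form associated with a matrix `G`. -/
def gramB (G : Matrix ι ι ℂ) (x y : ι → ℂ) : ℂ := star x ⬝ᵥ G.mulVec y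

variable (G : Matrix ι ι ℂ)

lemma gramB_expand (x y : ι → ℂ) :
    gramB G x y = ∑ i : ι, ∑ j : ι, star (x i) * G i j * y j := by
  rw [gramB, dotProduct]
  refine Finset.sum_congr rfl fun i _ => ?_
  rw [mulVec, dotProduct, Finset.mul_sum]
  refine Finset.sum_congr rfl fun j _ => ?_
  simp only [Pi.star_apply]
  ring

lemma gramB_smul_left (a : ℂ) (x y : ι → ℂ) :
    gramB G (a • x) y = (starRingEnd ℂ) a * gramB G x y := by
  rw [gramB_expand, gramB_expand, Finset.mul_sum]
  refine Finset.sum_congr rfl fun i _ => ?_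
  rw [Finset.mul_sum]
  refine Finset.sum_congr rfl fun j _ => ?_
  simp only [Pi.smul_apply, smul_eq_mul, star_mul', starRingEnd_apply]
  ring

lemma gramB_smul_right (a : ℂ) (x y : ι → ℂ) :
    gramB G x (a • y) = a * gramB G x y := by
  simp [gramB, mulVec_smul, dotProduct_smul, smul_eq_mul]

lemma gramB_sub_left (x x' y : ι → ℂ) :
    gramB G (x - x') y = gramB G x y - gramB G x' y := by
  simp [gramB, star_sub, sub_dotProduct]

lemma gramB_add_right (x y y' : ι → ℂ) :
    gramB G x (y + y') = gramB G x y + gramB G x y' := by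
  simp [gramB, mulVec_add, dotProduct_add]

lemma gramB_sub_right (x y y' : ι → ℂ) :
    gramB G x (y - y') = gramB G x y - gramB G x y' := by
  simp [gramB, mulVec_sub, dotProduct_sub]

lemma gramB_zero_right (x : ι → ℂ) : gramB G x 0 = 0 := by
  simp [gramB]

lemma gramB_zero_left (y : ι → ℂ) : gramB G 0 y = 0 := by
  simp [gramB]

lemma gramB_sum_right {κ : Type} (s : Finset κ) (f : κ → ι → ℂ) (x : ι → ℂ) :
    gramB G x (∑ k ∈ s, f k) = ∑ k ∈ s, gramB G x (f k) := by
  classical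
  induction s using Finset.induction_on with
  | empty => simp [gramB_zero_right]
  | insert _ _ h ih => rw [Finset.sum_insert h, Finset.sum_insert h, gramB_add_right, ih]

lemma gramB_add_left (x x' y : ι → ℂ) :
    gramB G (x + x') y = gramB G x y + gramB G x' y := by
  simp [gramB, star_add, add_dotProduct]

lemma gramB_sum_left {κ : Type} (s : Finset κ) (f : κ → ι → ℂ) (y : ι → ℂ) :
    gramB G (∑ k ∈ s, f k) y = ∑ k ∈ s, gramB G (f k) y := by
  classical
  induction s using Finset.induction_on with
  | empty => simp [gramB_zero_left]
  | insert _ _ h ih => rw [Finset.sum_insert h, Finset.sum_insert h, gramB_add_left, ih]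

lemma gramB_single_left (i : ι) (y : ι → ℂ) :
    gramB G (Pi.single i 1) y = G.mulVec y i := by
  rw [gramB_expand, mulVec, dotProduct]
  rw [Finset.sum_eq_single i]
  · refine Finset.sum_congr rfl fun j _ => ?_
    simp
  · intro b _ hb
    refine Finset.sum_eq_zero fun j _ => ?_
    simp [Pi.single_apply, hb]
  · simp

lemma gramB_single_single (i j : ι) :
    gramB G (Pi.single i 1) (Pi.single j 1) = G i j := by
  rw [gramB_single_left, mulVec, dotProduct, Finset.sum_eq_single j]
  · simp
  · intro b _ hb
    simp [Pi.single_apply, hb]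
  · simp

lemma gramB_conj (hG : Gᴴ = G) (x y : ι → ℂ) :
    (starRingEnd ℂ) (gramB G x y) = gramB G y x := by
  have hsym : ∀ i j, (starRingEnd ℂ) (G i j) = G j i := by
    intro i j
    have h2 := congrFun (congrFun hG j) i
    rw [← h2, conjTranspose_apply, starRingEnd_apply]
  rw [gramB_expand, gramB_expand, map_sum, Finset.sum_comm]
  refine Finset.sum_congr rfl fun j _ => ?_
  rw [map_sum]
  refine Finset.sum_congr rfl fun i _ => ?_
  rw [RingHom.map_mul, RingHom.map_mul, ← hsym i j]
  simp only [starRingEnd_apply, star_star]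
  ring

/-- Key vanishing lemma: class-pure vectors for non-paired eigenvalues are `G`-orthogonal. -/
lemma gramB_eq_zero (d : ι → ℂ)
    (hG4 : ∀ i j, G i j ≠ 0 → (starRingEnd ℂ) (d i) = -(d j))
    {x y : ι → ℂ} {μ ν : ℂ}
    (hx : ∀ i, x i ≠ 0 → d i = μ) (hy : ∀ j, y j ≠ 0 → d j = ν)
    (h : (starRingEnd ℂ) μ ≠ -ν) : gramB G x y = 0 := by
  rw [gramB_expand]
  refine Finset.sum_eq_zero fun i _ => ?_
  refine Finset.sum_eq_zero fun j _ => ?_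
  rcases eq_or_ne (x i) 0 with hxi | hxi
  · simp [hxi]
  rcases eq_or_ne (y j) 0 with hyj | hyj
  · simp [hyj]
  rcases eq_or_ne (G i j) 0 with hij | hij
  · simp [hij]
  exact absurd (hx i hxi ▸ hy j hyj ▸ hG4 i j hij) h

end

section R2lemmas

lemma R2_inl_inl {n : ℕ} (i j : Fin n) : R2 n (Sum.inl i) (Sum.inl j) = 0 := rfl

lemma R2_inr_inr {n : ℕ} (i j : Fin n) : R2 n (Sum.inr i) (Sum.inr j) = 0 := rfl

lemma R2_inl_inr {n : ℕ} (i j : Fin n) :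
    R2 n (Sum.inl i) (Sum.inr j) = if j = i.rev then 1 else 0 := rfl

lemma R2_inr_inl {n : ℕ} (i j : Fin n) :
    R2 n (Sum.inr i) (Sum.inl j) = if j = i.rev then 1 else 0 := rfl

lemma R2_succ_embed (m : ℕ) (k l : Fin m ⊕ Fin m) :
    R2 (m+1) (Sum.map Fin.succ Fin.castSucc k) (Sum.map Fin.succ Fin.castSucc l) = R2 m k l := by
  rcases k with k | k <;> rcases l with l | l <;>
    simp only [Sum.map_inl, Sum.map_inr, R2_inl_inl, R2_inr_inr, R2_inl_inr, R2_inr_inl,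
      Fin.rev_succ, Fin.rev_castSucc, Fin.castSucc_inj, Fin.succ_inj]

end R2lemmas

lemma core (m : ℕ) : ∀ (ι : Type) [Fintype ι] [DecidableEq ι],
    Fintype.card ι = 2 * m → ∀ (d : ι → ℂ) (G : Matrix ι ι ℂ),
    (∀ i, (starRingEnd ℂ) (d i) ≠ -(d i)) → Gᴴ = G → G.det ≠ 0 →
    (∀ i j, G i j ≠ 0 → (starRingEnd ℂ) (d i) = -(d j)) →
    ∃ (v : (Fin m ⊕ Fin m) → ι → ℂ) (d' : Fin m ⊕ Fin m → ℂ),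
      (∀ k i, v k i ≠ 0 → d i = d' k) ∧
      (∀ k l, gramB G (v k) (v l) = R2 m k l) := by
  induction m with
  | zero =>
    intro ι _ _ hcard d G hd hherm hdet hpair
    refine ⟨fun _ => 0, fun _ => 0, ?_, ?_⟩
    · intro k
      rcases k with k | k <;> exact k.elim0
    · intro k
      rcases k with k | k <;> exact k.elim0
  | succ m IH =>
    intro ι _ _ hcard d G hd hherm hdet hpair
    -- find a hyperbolic pair
    have hne : Nonempty ι := by
      rw [← Fintype.card_pos_iff, hcard]; omega
    obtain ⟨i0⟩ := hne
    have hrow : ∃ j, G i0 j ≠ 0 := by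
      by_contra h
      push_neg at h
      exact hdet (Matrix.det_eq_zero_of_row_eq_zero i0 h)
    obtain ⟨j0, hc⟩ := hrow
    set c := G i0 j0 with hc_def
    have hij : i0 ≠ j0 := by
      rintro rfl
      exact hd i0 (hpair i0 i0 hc)
    have hdij : (starRingEnd ℂ) (d i0) = -(d j0) := hpair i0 j0 hc
    have hdji : (starRingEnd ℂ) (d j0) = -(d i0) := by
      have := congrArg (starRingEnd ℂ) hdij
      rw [_root_.map_neg, Complex.conj_conj] at this
      rw [← neg_eq_iff_eq_neg, ← this]
    set u : ι → ℂ := Pi.single i0 (1:ℂ) with hu_def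
    set w : ι → ℂ := c⁻¹ • (Pi.single j0 (1:ℂ) : ι → ℂ) with hw_def
    have hGj0j0 : G j0 j0 = 0 := by
      by_contra h
      exact hd j0 (hpair j0 j0 h)
    have hGi0i0 : G i0 i0 = 0 := by
      by_contra h
      exact hd i0 (hpair i0 i0 h)
    have huu : gramB G u u = 0 := by rw [hu_def, gramB_single_single, hGi0i0]
    have huw : gramB G u w = 1 := by
      rw [hu_def, hw_def, gramB_smul_right, gramB_single_single, ← hc_def,
        inv_mul_cancel₀ hc]
    have hwu : gramB G w u = 1 := by
      rw [← gramB_conj G hherm, huw, _root_.map_one]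
    have hww : gramB G w w = 0 := by
      rw [hw_def, gramB_smul_right, gramB_smul_left, gramB_single_single, hGj0j0]
      ring
    have hu_pure : ∀ i, u i ≠ 0 → d i = d i0 := by
      intro i hi
      rcases eq_or_ne i i0 with h | h
      · rw [h]
      · exact absurd (by simp [hu_def, Pi.single_apply, h]) hi
    have hw_pure : ∀ i, w i ≠ 0 → d i = d j0 := by
      intro i hi
      rcases eq_or_ne i j0 with h | h
      · rw [h]
      · exact absurd (by simp [hw_def, Pi.single_apply, h]) hi
    -- the complementary index set
    set ι' := {k : ι // k ≠ i0 ∧ k ≠ j0} with hι'_def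
    have hcard' : Fintype.card ι' = 2 * m := by
      have h1 : Fintype.card ι' = (Finset.univ.filter fun k : ι => k ≠ i0 ∧ k ≠ j0).card :=
        Fintype.card_subtype _
      have h2 : (Finset.univ.filter fun k : ι => k ≠ i0 ∧ k ≠ j0)
          = Finset.univ \ {i0, j0} := by
        ext x
        simp [not_or]
      have h3 : ({i0, j0} : Finset ι).card = 2 := by
        rw [Finset.card_insert_of_notMem (by simp [hij]), Finset.card_singleton]
      rw [h1, h2, Finset.card_sdiff_of_subset (Finset.subset_univ _), h3, Finset.card_univ, hcard]
      omega
    set ev : ι' → ι → ℂ := fun k => Pi.single (k : ι) 1 with hev_def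
    set α : ι' → ℂ := fun k => gramB G w (ev k) with hα_def
    set β : ι' → ℂ := fun k => gramB G u (ev k) with hβ_def
    set wv : ι' → ι → ℂ := fun k => ev k - α k • u - β k • w with hwv_def
    have hα' : ∀ k : ι', α k ≠ 0 → d i0 = d (k : ι) := by
      intro k hk
      rw [hα_def] at hk
      simp only [hw_def, hev_def, gramB_smul_left, gramB_single_single] at hk
      have hG : G j0 (k : ι) ≠ 0 := by
        intro h
        rw [h, mul_zero] at hk
        exact hk rfl
      have := hpair j0 (k : ι) hG
      rw [hdji] at this
      exact neg_injective this
    have hβ' : ∀ k : ι', β k ≠ 0 → d j0 = d (k : ι) := by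
      intro k hk
      rw [hβ_def] at hk
      simp only [hu_def, hev_def, gramB_single_single] at hk
      have := hpair i0 (k : ι) hk
      rw [hdij] at this
      exact neg_injective this
    have hwv_pure : ∀ (k : ι') (i : ι), wv k i ≠ 0 → d i = d (k : ι) := by
      intro k i hi
      rw [hwv_def] at hi
      simp only [Pi.sub_apply, Pi.smul_apply, smul_eq_mul] at hi
      rcases eq_or_ne i (k : ι) with h | h
      · rw [h]
      rcases eq_or_ne i i0 with h0 | h0
      · rw [h0] at hi ⊢
        have hu1 : u i0 = 1 := by simp [hu_def]
        have hw0 : w i0 = 0 := by simp [hw_def, Pi.single_apply, hij]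
        have he0 : ev k i0 = 0 := by
          simp only [hev_def, Pi.single_apply]
          rw [if_neg]
          intro hh
          exact k.2.1 hh.symm
        have hαk : α k ≠ 0 := by
          intro hh
          apply hi
          rw [he0, hu1, hw0, hh]
          ring
        rw [← hα' k hαk]
      rcases eq_or_ne i j0 with h1 | h1
      · rw [h1] at hi ⊢
        have hu0 : u j0 = 0 := by simp [hu_def, Pi.single_apply, Ne.symm hij]
        have hwj : w j0 = c⁻¹ := by simp [hw_def, Pi.single_apply]
        have he0 : ev k j0 = 0 := by
          simp only [hev_def, Pi.single_apply]
          rw [if_neg]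
          intro hh
          exact k.2.2 hh.symm
        have hβk : β k ≠ 0 := by
          intro hh
          apply hi
          rw [he0, hu0, hwj, hh]
          ring
        rw [← hβ' k hβk]
      · exfalso
        apply hi
        have he0 : ev k i = 0 := by
          simp [hev_def, Pi.single_apply, h]
        have hu0 : u i = 0 := by simp [hu_def, Pi.single_apply, h0]
        have hw0 : w i = 0 := by simp [hw_def, Pi.single_apply, h1]
        rw [he0, hu0, hw0, mul_zero, mul_zero, sub_zero, sub_zero]
    have hu_wv : ∀ k : ι', gramB G u (wv k) = 0 := by
      intro k
      rw [hwv_def]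
      simp only [gramB_sub_right, gramB_smul_right, huu, huw, ← hβ_def]
      ring
    have hw_wv : ∀ k : ι', gramB G w (wv k) = 0 := by
      intro k
      rw [hwv_def]
      simp only [gramB_sub_right, gramB_smul_right, hwu, hww, ← hα_def]
      ring
    have hwv_u : ∀ k : ι', gramB G (wv k) u = 0 := by
      intro k
      rw [← gramB_conj G hherm, hu_wv, _root_.map_zero]
    have hwv_w : ∀ k : ι', gramB G (wv k) w = 0 := by
      intro k
      rw [← gramB_conj G hherm, hw_wv, _root_.map_zero]
    set G' : Matrix ι' ι' ℂ := Matrix.of fun k l => gramB G (wv k) (wv l) with hG'_def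
    set d' : ι' → ℂ := fun k => d (k : ι) with hd'_def
    have hG'herm : G'ᴴ = G' := by
      ext k l
      rw [conjTranspose_apply, hG'_def]
      simp only [Matrix.of_apply]
      rw [← starRingEnd_apply, gramB_conj G hherm]
    have hd'2 : ∀ k : ι', (starRingEnd ℂ) (d' k) ≠ -(d' k) := fun k => hd (k : ι)
    have hG'pair : ∀ k l : ι', G' k l ≠ 0 → (starRingEnd ℂ) (d' k) = -(d' l) := by
      intro k l h
      by_contra hne2
      exact h (by
        rw [hG'_def]
        simp only [Matrix.of_apply]
        exact gramB_eq_zero G d hpair (hwv_pure k) (hwv_pure l) hne2)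
    have hG'det : G'.det ≠ 0 := by
      intro h0
      obtain ⟨x, hx0, hxker⟩ := Matrix.exists_mulVec_eq_zero_iff.mpr h0
      set y : ι → ℂ := ∑ k : ι', x k • wv k with hy_def
      have hu_y : gramB G u y = 0 := by
        rw [hy_def, gramB_sum_right]
        refine Finset.sum_eq_zero fun k _ => ?_
        rw [gramB_smul_right, hu_wv, mul_zero]
      have hw_y : gramB G w y = 0 := by
        rw [hy_def, gramB_sum_right]
        refine Finset.sum_eq_zero fun k _ => ?_
        rw [gramB_smul_right, hw_wv, mul_zero]
      have hyG : G.mulVec y = 0 := by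
        funext l
        have hl : G.mulVec y l = gramB G (Pi.single l 1) y := (gramB_single_left G l y).symm
        rw [Pi.zero_apply, hl]
        rcases eq_or_ne l i0 with heq | hl0
        · rw [heq, ← hu_def]; exact hu_y
        rcases eq_or_ne l j0 with heq | hl1
        · rw [heq]
          have : (Pi.single j0 1 : ι → ℂ) = c • w := by
            rw [hw_def, smul_smul, mul_inv_cancel₀ hc, one_smul]
          rw [this, gramB_smul_left, hw_y, mul_zero]
        set l' : ι' := ⟨l, hl0, hl1⟩ with hl'_def
        have hsingle : (Pi.single l 1 : ι → ℂ) = ev l' := by rw [hev_def]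
        have hwv_y : gramB G (wv l') y = 0 := by
          rw [hy_def, gramB_sum_right]
          have : ∀ k : ι', gramB G (wv l') (x k • wv k) = G' l' k * x k := by
            intro k
            rw [gramB_smul_right, hG'_def]
            simp only [Matrix.of_apply]
            ring
          rw [Finset.sum_congr rfl fun k _ => this k]
          exact congrFun hxker l'
        have hexp : gramB G (ev l') y
            = gramB G (wv l') y + (starRingEnd ℂ) (α l') * gramB G u y
              + (starRingEnd ℂ) (β l') * gramB G w y := by
          rw [hwv_def]
          simp only [gramB_sub_left, gramB_smul_left]
          ring
        rw [hsingle, hexp, hwv_y, hu_y, hw_y]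
        ring
      have hyne : y ≠ 0 := by
        obtain ⟨k0, hk0⟩ := Function.ne_iff.mp hx0
        intro h
        apply hk0
        have := congrFun h (k0 : ι)
        rw [hy_def] at this
        simp only [Finset.sum_apply, Pi.smul_apply, smul_eq_mul, Pi.zero_apply] at this
        rw [Finset.sum_eq_single k0] at this
        · rw [hwv_def] at this
          simp only [Pi.sub_apply, Pi.smul_apply, smul_eq_mul] at this
          have he1 : ev k0 (k0 : ι) = 1 := by simp [hev_def]
          have hu0 : u (k0 : ι) = 0 := by simp [hu_def, Pi.single_apply, k0.2.1]
          have hw0 : w (k0 : ι) = 0 := by simp [hw_def, Pi.single_apply, k0.2.2]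
          rw [he1, hu0, hw0, mul_zero, mul_zero, sub_zero, sub_zero, mul_one] at this
          rw [Pi.zero_apply] at hk0 ⊢
          exact this
        · intro b _ hb
          rw [hwv_def]
          simp only [Pi.sub_apply, Pi.smul_apply, smul_eq_mul]
          have he0 : ev b (k0 : ι) = 0 := by
            simp only [hev_def, Pi.single_apply]
            rw [if_neg]
            intro hh
            exact hb (Subtype.ext hh.symm)
          have hu0 : u (k0 : ι) = 0 := by simp [hu_def, Pi.single_apply, k0.2.1]
          have hw0 : w (k0 : ι) = 0 := by simp [hw_def, Pi.single_apply, k0.2.2]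
          rw [he0, hu0, hw0]
          ring
        · intro h'
          exact absurd (Finset.mem_univ k0) h'
      exact hdet (Matrix.exists_mulVec_eq_zero_iff.mp ⟨y, hyne, hyG⟩)
    obtain ⟨v', d'', hpure', hgram'⟩ := IH ι' hcard' d' G' hd'2 hG'herm hG'det hG'pair
    set V : Fin m ⊕ Fin m → ι → ℂ := fun l => ∑ k : ι', v' l k • wv k with hV_def
    have hVpure : ∀ l i, V l i ≠ 0 → d i = d'' l := by
      intro l i hi
      rw [hV_def] at hi
      simp only [Finset.sum_apply, Pi.smul_apply, smul_eq_mul] at hi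
      obtain ⟨k, _, hk⟩ := Finset.exists_ne_zero_of_sum_ne_zero hi
      have h1 : v' l k ≠ 0 := fun h => hk (by rw [h, zero_mul])
      have h2 : wv k i ≠ 0 := fun h => hk (by rw [h, mul_zero])
      rw [hwv_pure k i h2]
      exact hpure' l k h1
    have hVu : ∀ l, gramB G u (V l) = 0 := by
      intro l
      rw [hV_def, gramB_sum_right]
      refine Finset.sum_eq_zero fun k _ => ?_
      rw [gramB_smul_right, hu_wv, mul_zero]
    have hVw : ∀ l, gramB G w (V l) = 0 := by
      intro l
      rw [hV_def, gramB_sum_right]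
      refine Finset.sum_eq_zero fun k _ => ?_
      rw [gramB_smul_right, hw_wv, mul_zero]
    have hVu' : ∀ l, gramB G (V l) u = 0 := by
      intro l
      rw [← gramB_conj G hherm, hVu, _root_.map_zero]
    have hVw' : ∀ l, gramB G (V l) w = 0 := by
      intro l
      rw [← gramB_conj G hherm, hVw, _root_.map_zero]
    have hVV : ∀ l l', gramB G (V l) (V l') = R2 m l l' := by
      intro l l'
      rw [← hgram' l l', gramB_expand G', hV_def, gramB_sum_left]
      refine Finset.sum_congr rfl fun k _ => ?_
      rw [gramB_smul_left, gramB_sum_right, Finset.mul_sum]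
      refine Finset.sum_congr rfl fun k' _ => ?_
      rw [gramB_smul_right, hG'_def]
      simp only [Matrix.of_apply, Pi.star_apply, starRingEnd_apply]
      ring
    refine ⟨Sum.elim (fun i => Fin.cases u (fun i' => V (Sum.inl i')) i)
        (fun i => Fin.lastCases w (fun i' => V (Sum.inr i')) i),
      Sum.elim (fun i => Fin.cases (d i0) (fun i' => d'' (Sum.inl i')) i)
        (fun i => Fin.lastCases (d j0) (fun i' => d'' (Sum.inr i')) i), ?_, ?_⟩
    · intro k i
      rcases k with k | k
      · induction k using Fin.cases with
        | zero => simpa using hu_pure i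
        | succ k' => simpa using hVpure (Sum.inl k') i
      · induction k using Fin.lastCases with
        | last => simpa using hw_pure i
        | cast k' => simpa using hVpure (Sum.inr k') i
    · intro k l
      have hcsl : ∀ i : Fin m, i.castSucc ≠ Fin.last m := fun i => (Fin.castSucc_lt_last i).ne
      rcases k with k | k <;> rcases l with l | l
      · induction k using Fin.cases with
        | zero =>
          induction l using Fin.cases with
          | zero => simpa [R2_inl_inl] using huu
          | succ l' => simpa [R2_inl_inl] using hVu (Sum.inl l')
        | succ k' =>
          induction l using Fin.cases with
          | zero => simpa [R2_inl_inl] using hVu' (Sum.inl k')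
          | succ l' =>
            have := hVV (Sum.inl k') (Sum.inl l')
            rw [← R2_succ_embed m (Sum.inl k') (Sum.inl l')] at this
            simpa using this
      · induction k using Fin.cases with
        | zero =>
          induction l using Fin.lastCases with
          | last => simpa [R2_inl_inr, Fin.rev_zero] using huw
          | cast l' =>
            simpa [R2_inl_inr, Fin.rev_zero, hcsl l'] using hVu (Sum.inr l')
        | succ k' =>
          induction l using Fin.lastCases with
          | last =>
            have h0 : Fin.last m ≠ Fin.rev k'.succ := by
              rw [Fin.rev_succ]
              exact fun hh => hcsl k'.rev hh.symm
            simpa [R2_inl_inr, h0] using hVw' (Sum.inl k')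
          | cast l' =>
            have := hVV (Sum.inl k') (Sum.inr l')
            rw [← R2_succ_embed m (Sum.inl k') (Sum.inr l')] at this
            simpa using this
      · induction k using Fin.lastCases with
        | last =>
          induction l using Fin.cases with
          | zero => simpa [R2_inr_inl, Fin.rev_last] using hwu
          | succ l' =>
            have h0 : l'.succ ≠ Fin.rev (Fin.last m) := by
              rw [Fin.rev_last]; exact Fin.succ_ne_zero l'
            simpa [R2_inr_inl, h0] using hVw (Sum.inl l')
        | cast k' =>
          induction l using Fin.cases with
          | zero =>
            have h0 : (0 : Fin (m+1)) ≠ Fin.rev k'.castSucc := by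
              rw [Fin.rev_castSucc]
              exact (Fin.succ_ne_zero k'.rev).symm
            simpa [R2_inr_inl, h0] using hVu' (Sum.inr k')
          | succ l' =>
            have := hVV (Sum.inr k') (Sum.inl l')
            rw [← R2_succ_embed m (Sum.inr k') (Sum.inl l')] at this
            simpa using this
      · induction k using Fin.lastCases with
        | last =>
          induction l using Fin.lastCases with
          | last => simpa [R2_inr_inr] using hww
          | cast l' => simpa [R2_inr_inr] using hVw (Sum.inr l')
        | cast k' =>
          induction l using Fin.lastCases with
          | last => simpa [R2_inr_inr] using hVw' (Sum.inr k')
          | cast l' =>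
            have := hVV (Sum.inr k') (Sum.inr l')
            rw [← R2_succ_embed m (Sum.inr k') (Sum.inr l')] at this
            simpa using this

theorem stmt8 (n : ℕ) (A : Matrix (Fin n ⊕ Fin n) (Fin n ⊕ Fin n) ℂ)
    (hstruct : R2 n * Aᴴ * R2 n = -A)
    (hdiag : ∃ Q : Matrix (Fin n ⊕ Fin n) (Fin n ⊕ Fin n) ℂ,
      IsUnit Q.det ∧ (Q⁻¹ * A * Q).IsDiag)
    (hspec : ∀ μ ∈ spectrum ℂ A, μ.re ≠ 0) :
    ∃ P : Matrix (Fin n ⊕ Fin n) (Fin n ⊕ Fin n) ℂ,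
      Pᴴ * R2 n * P = R2 n ∧ (P⁻¹ * A * P).IsDiag := by
  classical
  obtain ⟨Q, hQ, hDdiag⟩ := hdiag
  obtain ⟨D, hD_def⟩ : ∃ D, D = Q⁻¹ * A * Q := ⟨_, rfl⟩
  rw [← hD_def] at hDdiag
  set d : Fin n ⊕ Fin n → ℂ := fun i => D i i with hd_def
  have hDeq : D = diagonal d := (hDdiag.diagonal_diag).symm
  have hQQ : Q * Q⁻¹ = 1 := Matrix.mul_nonsing_inv Q hQ
  have hAQ : A * Q = Q * D := by
    rw [hD_def, ← Matrix.mul_assoc, ← Matrix.mul_assoc, hQQ, one_mul]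
  -- each diagonal entry is an eigenvalue of A
  have hmem : ∀ i, d i ∈ spectrum ℂ A := by
    intro i
    rw [spectrum.mem_iff]
    intro hunit
    have hdetM : (algebraMap ℂ (Matrix (Fin n ⊕ Fin n) (Fin n ⊕ Fin n) ℂ) (d i) - A).det = 0 := by
      have halg : algebraMap ℂ (Matrix (Fin n ⊕ Fin n) (Fin n ⊕ Fin n) ℂ) (d i)
          = diagonal (fun _ => d i) := by
        rw [Matrix.algebraMap_eq_diagonal]
        rfl
      have hcomm : diagonal (fun _ : Fin n ⊕ Fin n => d i) * Q
          = Q * diagonal (fun _ : Fin n ⊕ Fin n => d i) := by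
        ext a b
        rw [Matrix.diagonal_mul, Matrix.mul_diagonal]
        ring
      have h1 : (algebraMap ℂ (Matrix (Fin n ⊕ Fin n) (Fin n ⊕ Fin n) ℂ) (d i) - A) * Q
          = Q * (diagonal (fun j => d i - d j)) := by
        rw [halg, Matrix.sub_mul, hAQ, hcomm, hDeq, ← Matrix.mul_sub, Matrix.diagonal_sub]
      have h2 := congrArg Matrix.det h1
      rw [Matrix.det_mul, Matrix.det_mul, Matrix.det_diagonal] at h2
      have h3 : ∏ j, (d i - d j) = 0 :=
        Finset.prod_eq_zero (Finset.mem_univ i) (by ring)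
      rw [h3, mul_zero] at h2
      have hQd : Q.det ≠ 0 := hQ.ne_zero
      exact (mul_eq_zero.mp h2).resolve_right hQd
    rw [Matrix.isUnit_iff_isUnit_det, hdetM] at hunit
    exact (isUnit_iff_ne_zero.mp hunit) rfl
  have hre : ∀ i, (starRingEnd ℂ) (d i) ≠ -(d i) := by
    intro i h
    apply hspec (d i) (hmem i)
    have := congrArg Complex.re h
    simp at this
    linarith
  -- the Gram matrix
  set G : Matrix (Fin n ⊕ Fin n) (Fin n ⊕ Fin n) ℂ := Qᴴ * R2 n * Q with hG_def
  have hherm : Gᴴ = G := by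
    rw [hG_def, conjTranspose_mul, conjTranspose_mul, conjTranspose_conjTranspose,
      R2_conjTranspose, Matrix.mul_assoc]
  have hdetG : G.det ≠ 0 := by
    rw [hG_def, Matrix.det_mul, Matrix.det_mul, Matrix.det_conjTranspose]
    have h1 : (R2 n).det ≠ 0 := (R2_det_isUnit n).ne_zero
    have h2 : Q.det ≠ 0 := hQ.ne_zero
    have h3 : star Q.det ≠ 0 := star_ne_zero.mpr h2
    exact mul_ne_zero (mul_ne_zero h3 h1) h2
  -- the pairing condition
  have hARA : Aᴴ * R2 n = -(R2 n * A) := by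
    calc Aᴴ * R2 n = (R2 n * R2 n) * Aᴴ * R2 n := by rw [R2_mul_R2, one_mul]
    _ = R2 n * (R2 n * Aᴴ * R2 n) := by simp only [Matrix.mul_assoc]
    _ = R2 n * (-A) := by rw [hstruct]
    _ = -(R2 n * A) := by rw [Matrix.mul_neg]
  have hDGGD : Dᴴ * G + G * D = 0 := by
    have hQD : Dᴴ * Qᴴ = Qᴴ * Aᴴ := by
      calc Dᴴ * Qᴴ = (Q * D)ᴴ := (conjTranspose_mul Q D).symm
      _ = (A * Q)ᴴ := by rw [hAQ]
      _ = Qᴴ * Aᴴ := conjTranspose_mul A Q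
    have e1 : Dᴴ * G = -(Qᴴ * (R2 n * (A * Q))) := by
      calc Dᴴ * G = Dᴴ * Qᴴ * (R2 n * Q) := by
            rw [hG_def]
            simp only [Matrix.mul_assoc]
      _ = Qᴴ * Aᴴ * (R2 n * Q) := by rw [hQD]
      _ = Qᴴ * (Aᴴ * R2 n) * Q := by simp only [Matrix.mul_assoc]
      _ = Qᴴ * (-(R2 n * A)) * Q := by rw [hARA]
      _ = -(Qᴴ * (R2 n * (A * Q))) := by
            rw [Matrix.mul_neg, Matrix.neg_mul]
            simp only [Matrix.mul_assoc]
    have e2 : G * D = Qᴴ * (R2 n * (A * Q)) := by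
      rw [hG_def]
      calc Qᴴ * R2 n * Q * D = Qᴴ * R2 n * (Q * D) := by simp only [Matrix.mul_assoc]
      _ = Qᴴ * R2 n * (A * Q) := by rw [hAQ]
      _ = Qᴴ * (R2 n * (A * Q)) := by simp only [Matrix.mul_assoc]
    rw [e1, e2, neg_add_cancel]
  have hpair : ∀ i j, G i j ≠ 0 → (starRingEnd ℂ) (d i) = -(d j) := by
    intro i j hij
    have := congrFun (congrFun hDGGD i) j
    rw [Matrix.add_apply, Matrix.zero_apply, hDeq, Matrix.diagonal_conjTranspose,
      Matrix.diagonal_mul, Matrix.mul_diagonal] at this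
    rw [Pi.star_apply] at this
    have h2 : (star (d i) + d j) * G i j = 0 := by linear_combination this
    rcases mul_eq_zero.mp h2 with h3 | h3
    · rw [starRingEnd_apply]
      linear_combination h3
    · exact absurd h3 hij
  have hcard : Fintype.card (Fin n ⊕ Fin n) = 2 * n := by simp; omega
  obtain ⟨v, d', hpure, hgram⟩ := core n (Fin n ⊕ Fin n) hcard d G hre hherm hdetG hpair
  set S : Matrix (Fin n ⊕ Fin n) (Fin n ⊕ Fin n) ℂ := Matrix.of fun i k => v k i with hS_def
  have hSGS : Sᴴ * G * S = R2 n := by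
    ext k l
    rw [← hgram k l, gramB_expand]
    simp only [Matrix.mul_apply, conjTranspose_apply, hS_def, Matrix.of_apply, Finset.sum_mul]
    rw [Finset.sum_comm]
  have hdetS : IsUnit S.det := by
    have h1 := congrArg Matrix.det hSGS
    rw [Matrix.det_mul, Matrix.det_mul] at h1
    rw [isUnit_iff_ne_zero]
    intro h0
    rw [h0, mul_zero] at h1
    exact (R2_det_isUnit n).ne_zero h1.symm
  refine ⟨Q * S, ?_, ?_⟩
  · have e1 : (Q * S)ᴴ * R2 n * (Q * S) = Sᴴ * G * S := by
      rw [conjTranspose_mul, hG_def]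
      simp only [Matrix.mul_assoc]
    rw [e1, hSGS]
  · have hDS : D * S = S * diagonal d' := by
      ext i l
      rw [hDeq, Matrix.diagonal_mul, Matrix.mul_diagonal, hS_def]
      simp only [Matrix.of_apply]
      rcases eq_or_ne (v l i) 0 with h | h
      · rw [h, mul_zero, zero_mul]
      · rw [hpure l i h]
        ring
    have hP : (Q * S)⁻¹ * A * (Q * S) = diagonal d' := by
      rw [Matrix.mul_inv_rev]
      calc S⁻¹ * Q⁻¹ * A * (Q * S) = S⁻¹ * (Q⁻¹ * A * Q * S) := by
            simp only [Matrix.mul_assoc]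
      _ = S⁻¹ * (D * S) := by rw [hD_def]
      _ = S⁻¹ * S * diagonal d' := by rw [hDS, Matrix.mul_assoc]
      _ = diagonal d' := by rw [Matrix.nonsing_inv_mul S hdetS, one_mul]
    rw [hP]
    exact Matrix.isDiag_diagonal d'
end

section
/- A matrix Q ∈ M_{2n}(ℂ) is both unitary and symplectic if and only if Q = [V J_{2n}ᵀV] (block columns) for some V ∈ M_{2n×n}(ℂ) with VᴴV = I_n and VᴴJ_{2n}V = 0. -/
open Matrix

lemma Jmat_transpose (n : ℕ) : (Jmat n)ᵀ = -(Jmat n) := by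
  simp [Jmat, Matrix.fromBlocks_transpose, Matrix.fromBlocks_neg]

lemma Jmat_conjTranspose (n : ℕ) : (Jmat n)ᴴ = -(Jmat n) := by
  simp [Jmat, Matrix.fromBlocks_conjTranspose, Matrix.fromBlocks_neg]

lemma Jmat_mul_Jmat (n : ℕ) : Jmat n * Jmat n = -1 := by
  have h1 : (-1 : Matrix (Fin n ⊕ Fin n) (Fin n ⊕ Fin n) ℂ) =
      Matrix.fromBlocks (-1) 0 0 (-1) := by
    rw [← Matrix.fromBlocks_one, Matrix.fromBlocks_neg]; simp
  rw [h1]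
  simp [Jmat, Matrix.fromBlocks_multiply]

theorem stmt13 (n : ℕ) (Q : Matrix (Fin n ⊕ Fin n) (Fin n ⊕ Fin n) ℂ) :
    (Qᴴ * Q = 1 ∧ Qᴴ * Jmat n * Q = Jmat n) ↔
    ∃ V : Matrix (Fin n ⊕ Fin n) (Fin n) ℂ,
      Vᴴ * V = 1 ∧ Vᴴ * Jmat n * V = 0 ∧
      Q = Matrix.fromCols V ((Jmat n)ᵀ * V) := by
  have hJT := Jmat_transpose n
  have hJH := Jmat_conjTranspose n
  have hJJ := Jmat_mul_Jmat n
  set J := Jmat n with hJdef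
  constructor
  · rintro ⟨hU, hS⟩
    have hU' : Q * Qᴴ = 1 := mul_eq_one_comm.mp hU
    have hcomm : J * Q = Q * J := by
      calc J * Q = (Q * Qᴴ) * J * Q := by rw [hU', Matrix.one_mul]
        _ = Q * (Qᴴ * J * Q) := by rw [Matrix.mul_assoc, Matrix.mul_assoc,
              Matrix.mul_assoc]
        _ = Q * J := by rw [hS]
    set V := Q.toCols₁ with hVdef
    set W := Q.toCols₂ with hWdef
    have hQ : Q = Matrix.fromCols V W := (Matrix.fromCols_toCols Q).symm
    have h2 : Matrix.fromCols (J * V) (J * W) = Matrix.fromCols (-W) V := by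
      have h := hcomm
      rw [hQ, Matrix.mul_fromCols, hJdef, Jmat,
        Matrix.fromCols_mul_fromBlocks] at h
      simpa [hJdef, Jmat] using h
    obtain ⟨hJV, hJW⟩ := (Matrix.fromCols_ext_iff _ _ _ _).mp h2
    have hW : W = Jᵀ * V := by
      rw [hJT, Matrix.neg_mul, hJV, neg_neg]
    have hQH : Qᴴ = Matrix.fromRows Vᴴ Wᴴ := by
      rw [hQ, Matrix.conjTranspose_fromCols_eq_fromRows_conjTranspose]
    refine ⟨V, ?_, ?_, by rw [hQ, hW]⟩
    · have h1 : Matrix.fromBlocks (Vᴴ * V) (Vᴴ * W) (Wᴴ * V) (Wᴴ * W) =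
          Matrix.fromBlocks 1 0 0 1 := by
        rw [← Matrix.fromRows_mul_fromCols, ← hQH, ← hQ, hU, Matrix.fromBlocks_one]
      exact ((Matrix.fromBlocks_inj.mp h1).1)
    · have h1 : Matrix.fromBlocks (Vᴴ * (J * V)) (Vᴴ * (J * W)) (Wᴴ * (J * V)) (Wᴴ * (J * W)) =
          Matrix.fromBlocks 0 1 (-1) 0 := by
      -- Qᴴ * (J*Q) = J
        have hS' : Qᴴ * (J * Q) = J := by rw [← Matrix.mul_assoc]; exact hS
        rw [hQ, Matrix.mul_fromCols,
          Matrix.conjTranspose_fromCols_eq_fromRows_conjTranspose,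
          Matrix.fromRows_mul_fromCols] at hS'
        rw [hS', hJdef, Jmat]
      have := (Matrix.fromBlocks_inj.mp h1).1
      rw [Matrix.mul_assoc]; exact this
  · rintro ⟨V, hV1, hV2, hQ⟩
    have hV2' : Vᴴ * (J * V) = 0 := by rw [← Matrix.mul_assoc]; exact hV2
    have hQ' : Q = Matrix.fromCols V (-(J * V)) := by
      rw [hQ, hJT, Matrix.neg_mul]
    have hQH : Qᴴ = Matrix.fromRows Vᴴ (Vᴴ * J) := by
      rw [hQ', Matrix.conjTranspose_fromCols_eq_fromRows_conjTranspose,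
        Matrix.conjTranspose_neg, Matrix.conjTranspose_mul, hJH]
      simp
    have hJJV : J * (J * V) = -V := by
      rw [← Matrix.mul_assoc, hJJ]; simp
    constructor
    · rw [hQH, hQ', Matrix.fromRows_mul_fromCols]
      have e2 : Vᴴ * -(J * V) = 0 := by simp [Matrix.mul_neg, hV2']
      have e4 : Vᴴ * J * -(J * V) = 1 := by
        simp [Matrix.mul_neg, Matrix.mul_assoc, hJJV, hV1]
      rw [hV1, e2, hV2, e4, Matrix.fromBlocks_one]
    · have hJQ : J * Q = Matrix.fromCols (J * V) V := by
        rw [hQ', Matrix.mul_fromCols, Matrix.mul_neg, hJJV, neg_neg]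
      rw [Matrix.mul_assoc, hQH, hJQ, Matrix.fromRows_mul_fromCols]
      have e3 : Vᴴ * J * (J * V) = -1 := by
        simp [Matrix.mul_assoc, hJJV, Matrix.mul_neg, hV1]
      rw [hV2', hV1, e3, hV2, hJdef, Jmat]
end

section
/- A matrix Q ∈ M_{2n}(ℂ) is both unitary and perplectic if and only if Q = [V R_{2n}VR_n] for some V ∈ M_{2n×n}(ℂ) with VᴴV = I_n and VᴴR_{2n}V = 0. -/
open Matrix

lemma mul_cancel_left_of_sq_one {m : Type*} [Fintype m] [DecidableEq m]
    {A : Matrix m m ℂ} (hA : A * A = 1) {k : Type*} (X : Matrix m k ℂ) :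
    A * (A * X) = X := by rw [← Matrix.mul_assoc, hA, Matrix.one_mul]

theorem stmt14 (n : ℕ) (Q : Matrix (Fin n ⊕ Fin n) (Fin n ⊕ Fin n) ℂ) :
    (Qᴴ * Q = 1 ∧ Qᴴ * R2 n * Q = R2 n) ↔
    ∃ V : Matrix (Fin n ⊕ Fin n) (Fin n) ℂ,
      Vᴴ * V = 1 ∧ Vᴴ * R2 n * V = 0 ∧
      Q = Matrix.fromCols V (R2 n * V * Rrev n) := by
  have hR2 := R2_mul_R2 n
  have hRR := Rrev_mul_Rrev n
  constructor
  · rintro ⟨h1, h2⟩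
    have h1' := h1
    set V := Q.toCols₁ with hV
    set W := Q.toCols₂ with hW
    have hQ : Q = fromCols V W := (fromCols_toCols Q).symm
    rw [hQ, conjTranspose_fromCols_eq_fromRows_conjTranspose,
      fromRows_mul_fromCols, ← fromBlocks_one] at h1
    rw [hQ, conjTranspose_fromCols_eq_fromRows_conjTranspose,
      fromRows_mul, fromRows_mul_fromCols,
      show R2 n = fromBlocks 0 (Rrev n) (Rrev n) 0 from rfl] at h2
    have hVV : Vᴴ * V = 1 := by
      have := congrArg toBlocks₁₁ h1; simpa only [toBlocks_fromBlocks₁₁] using this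
    have hVW : Vᴴ * W = 0 := by
      have := congrArg toBlocks₁₂ h1; simpa only [toBlocks_fromBlocks₁₂] using this
    have hWW : Wᴴ * W = 1 := by
      have := congrArg toBlocks₂₂ h1; simpa only [toBlocks_fromBlocks₂₂] using this
    have hVRV : Vᴴ * R2 n * V = 0 := by
      have := congrArg toBlocks₁₁ h2; simpa only [toBlocks_fromBlocks₁₁, R2] using this
    have hVRW : Vᴴ * R2 n * W = Rrev n := by
      have := congrArg toBlocks₁₂ h2; simpa only [toBlocks_fromBlocks₁₂, R2] using this
    have hWRV : Wᴴ * R2 n * V = Rrev n := by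
      have := congrArg conjTranspose hVRW
      simp only [conjTranspose_mul, conjTranspose_conjTranspose, R2_conjTranspose,
        Rrev_conjTranspose] at this
      rw [← this, Matrix.mul_assoc]
    refine ⟨V, hVV, hVRV, ?_⟩
    have hA : Vᴴ * (R2 n * V * Rrev n) = 0 := by
      rw [← Matrix.mul_assoc, ← Matrix.mul_assoc, hVRV, Matrix.zero_mul]
    have hB : Wᴴ * (R2 n * V * Rrev n) = 1 := by
      rw [← Matrix.mul_assoc, ← Matrix.mul_assoc, hWRV, hRR]
    have key : Qᴴ * W = Qᴴ * (R2 n * V * Rrev n) := by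
      rw [hQ, conjTranspose_fromCols_eq_fromRows_conjTranspose, fromRows_mul, fromRows_mul,
        hVW, hWW, hA, hB]
    have hQQ : Q * Qᴴ = 1 := mul_eq_one_comm.mp h1'
    have hWeq : W = R2 n * V * Rrev n := by
      have := congrArg (Q * ·) key
      simpa only [← Matrix.mul_assoc, hQQ, Matrix.one_mul] using this
    rw [hQ, hWeq]
  · rintro ⟨V, hVV, hVRV, rfl⟩
    set W := R2 n * V * Rrev n with hWdef
    have hWH : Wᴴ = Rrev n * (Vᴴ * R2 n) := by
      rw [hWdef]
      simp [conjTranspose_mul, R2_conjTranspose, Rrev_conjTranspose, Matrix.mul_assoc]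
    have hVW : Vᴴ * W = 0 := by
      rw [hWdef, ← Matrix.mul_assoc, ← Matrix.mul_assoc, hVRV, Matrix.zero_mul]
    have hWV : Wᴴ * V = 0 := by
      rw [hWH, Matrix.mul_assoc, Matrix.mul_assoc, ← Matrix.mul_assoc Vᴴ, hVRV,
        Matrix.mul_zero]
    have hWW : Wᴴ * W = 1 := by
      rw [hWH, hWdef]
      simp only [Matrix.mul_assoc]
      rw [mul_cancel_left_of_sq_one hR2, ← Matrix.mul_assoc Vᴴ, hVV, Matrix.one_mul, hRR]
    have hVRW : Vᴴ * R2 n * W = Rrev n := by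
      rw [hWdef]
      simp only [Matrix.mul_assoc]
      rw [mul_cancel_left_of_sq_one hR2, ← Matrix.mul_assoc, hVV, Matrix.one_mul]
    have hWRV : Wᴴ * R2 n * V = Rrev n := by
      rw [hWH]
      simp only [Matrix.mul_assoc]
      rw [mul_cancel_left_of_sq_one hR2, hVV, Matrix.mul_one]
    have hWRW : Wᴴ * R2 n * W = 0 := by
      have h0 : Vᴴ * (R2 n * (V * Rrev n)) = 0 := by
        rw [← Matrix.mul_assoc, ← Matrix.mul_assoc, hVRV, Matrix.zero_mul]
      rw [hWH, hWdef]
      simp only [Matrix.mul_assoc]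
      rw [mul_cancel_left_of_sq_one hR2, h0, Matrix.mul_zero]
    constructor
    · rw [conjTranspose_fromCols_eq_fromRows_conjTranspose, fromRows_mul_fromCols,
        hVV, hVW, hWV, hWW, fromBlocks_one]
    · rw [conjTranspose_fromCols_eq_fromRows_conjTranspose, fromRows_mul,
        fromRows_mul_fromCols, hVRV, hVRW, hWRV, hWRW,
        show R2 n = fromBlocks 0 (Rrev n) (Rrev n) 0 from rfl]
end

section
/- Let A = N + N⋆ ∈ M_{2n}(ℂ) where N = VDVᴴ for V ∈ M_{2n×n}(ℂ) with VᴴV = I_n, VᴴJ_{2n}V = 0, D = diag(λ₁,…,λ_n) invertible, and N⋆ = J_{2n}ᵀNᴴJ_{2n}. Choose any square roots λᵢ^{1/2} and set N^{1/2} = V diag(λ₁^{1/2},…,λ_n^{1/2}) Vᴴ. Then (N^{1/2} + (N^{1/2})⋆)² = A, i.e. N^{1/2} + (N^{1/2})⋆ is a normal skew-Hamiltonian square root of A. -/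
open Matrix
theorem stmt19 (n : ℕ) (V : Matrix (Fin n ⊕ Fin n) (Fin n) ℂ)
    (d sq : Fin n → ℂ)
    (hV1 : Vᴴ * V = 1) (hV2 : Vᴴ * Jmat n * V = 0)
    (hd : ∀ i, d i ≠ 0) (hsq : ∀ i, sq i ^ 2 = d i)
    (N M : Matrix (Fin n ⊕ Fin n) (Fin n ⊕ Fin n) ℂ)
    (hN : N = V * Matrix.diagonal d * Vᴴ)
    (hM : M = V * Matrix.diagonal sq * Vᴴ) :
    (M + (Jmat n)ᵀ * Mᴴ * Jmat n) * (M + (Jmat n)ᵀ * Mᴴ * Jmat n)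
      = N + (Jmat n)ᵀ * Nᴴ * Jmat n ∧
    (M + (Jmat n)ᵀ * Mᴴ * Jmat n)ᴴ * (M + (Jmat n)ᵀ * Mᴴ * Jmat n)
      = (M + (Jmat n)ᵀ * Mᴴ * Jmat n) * (M + (Jmat n)ᵀ * Mᴴ * Jmat n)ᴴ ∧
    (Jmat n)ᵀ * (M + (Jmat n)ᵀ * Mᴴ * Jmat n)ᴴ * Jmat n
      = M + (Jmat n)ᵀ * Mᴴ * Jmat n := by
  set J := Jmat n with hJ
  have hJt : Jᵀ = -J := by
    simp [hJ, Jmat, Matrix.fromBlocks_transpose, Matrix.fromBlocks_neg]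
  have hJJ : J * J = -1 := by
    simp [hJ, Jmat, Matrix.fromBlocks_multiply, ← Matrix.fromBlocks_one,
      Matrix.fromBlocks_neg]
  have hJJt : J * Jᵀ = 1 := by rw [hJt, Matrix.mul_neg, hJJ, neg_neg]
  have hJc : Jᴴ = Jᵀ := by
    ext i j
    cases i <;> cases j <;>
      simp [hJ, Jmat, Matrix.conjTranspose_apply, Matrix.transpose_apply,
        Matrix.fromBlocks, Matrix.one_apply]
  have hV2' : Vᴴ * Jᵀ * V = 0 := by
    rw [hJt, Matrix.mul_neg, Matrix.neg_mul, hV2, neg_zero]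
  have mul3 : ∀ e f : Fin n → ℂ,
      (V * Matrix.diagonal e * Vᴴ) * (V * Matrix.diagonal f * Vᴴ)
        = V * Matrix.diagonal (fun i => e i * f i) * Vᴴ := by
    intro e f
    have h : (V * Matrix.diagonal e * Vᴴ) * (V * Matrix.diagonal f * Vᴴ)
        = V * Matrix.diagonal e * (Vᴴ * V) * Matrix.diagonal f * Vᴴ := by
      simp only [Matrix.mul_assoc]
    rw [h, hV1, Matrix.mul_one, Matrix.mul_assoc V, Matrix.diagonal_mul_diagonal]
  have zJ : ∀ e f : Fin n → ℂ,
      (V * Matrix.diagonal e * Vᴴ) * J * (V * Matrix.diagonal f * Vᴴ) = 0 := by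
    intro e f
    have h : (V * Matrix.diagonal e * Vᴴ) * J * (V * Matrix.diagonal f * Vᴴ)
        = V * Matrix.diagonal e * (Vᴴ * J * V) * Matrix.diagonal f * Vᴴ := by
      simp only [Matrix.mul_assoc]
    rw [h, hV2]; simp
  have zJt : ∀ e f : Fin n → ℂ,
      (V * Matrix.diagonal e * Vᴴ) * Jᵀ * (V * Matrix.diagonal f * Vᴴ) = 0 := by
    intro e f
    have h : (V * Matrix.diagonal e * Vᴴ) * Jᵀ * (V * Matrix.diagonal f * Vᴴ)
        = V * Matrix.diagonal e * (Vᴴ * Jᵀ * V) * Matrix.diagonal f * Vᴴ := by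
      simp only [Matrix.mul_assoc]
    rw [h, hV2']; simp
  have hMH : Mᴴ = V * Matrix.diagonal (fun i => star (sq i)) * Vᴴ := by
    rw [hM]
    simp only [Matrix.conjTranspose_mul, Matrix.conjTranspose_conjTranspose,
      Matrix.diagonal_conjTranspose, Matrix.mul_assoc]
    rfl
  have hNH : Nᴴ = V * Matrix.diagonal (fun i => star (d i)) * Vᴴ := by
    rw [hN]
    simp only [Matrix.conjTranspose_mul, Matrix.conjTranspose_conjTranspose,
      Matrix.diagonal_conjTranspose, Matrix.mul_assoc]
    rfl
  -- vanishing sandwiches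
  have sMJtM : M * Jᵀ * Mᴴ = 0 := by rw [hMH, hM, zJt]
  have sMHJtMH : Mᴴ * Jᵀ * Mᴴ = 0 := by rw [hMH, zJt]
  have sMJM : M * J * M = 0 := by rw [hM, zJ]
  have sMHJM : Mᴴ * J * M = 0 := by rw [hMH, hM, zJ]
  have sMJMH : M * J * Mᴴ = 0 := by rw [hMH, hM, zJ]
  have sMJtMz : M * Jᵀ * M = 0 := by rw [hM, zJt]
  have sMHJMH : Mᴴ * J * Mᴴ = 0 := by rw [hMH, zJ]
  have hMM : M * M = N := by
    have hsq' : (fun i => sq i * sq i) = d := by funext i; rw [← hsq i]; ring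
    rw [hM, mul3, hsq', hN]
  have hMHMH : Mᴴ * Mᴴ = Nᴴ := by
    have hsq' : (fun i => star (sq i) * star (sq i)) = fun i => star (d i) := by
      funext i; rw [← hsq i]; rw [pow_two, StarMul.star_mul]
    rw [hMH, mul3, hsq', hNH]
  have hcomm : Mᴴ * M = M * Mᴴ := by
    have hc : (fun i => star (sq i) * sq i) = fun i => sq i * star (sq i) := by
      funext i; ring
    rw [hMH, hM, mul3, mul3, hc]
  -- expansion helpers
  have exp1 : ∀ A B : Matrix (Fin n ⊕ Fin n) (Fin n ⊕ Fin n) ℂ,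
      A * (Jᵀ * B * J) = (A * Jᵀ * B) * J := by
    intro A B; simp only [Matrix.mul_assoc]
  have exp2 : ∀ A B : Matrix (Fin n ⊕ Fin n) (Fin n ⊕ Fin n) ℂ,
      (Jᵀ * A * J) * B = Jᵀ * (A * J * B) := by
    intro A B; simp only [Matrix.mul_assoc]
  have exp3 : ∀ A B : Matrix (Fin n ⊕ Fin n) (Fin n ⊕ Fin n) ℂ,
      (Jᵀ * A * J) * (Jᵀ * B * J) = Jᵀ * (A * B) * J := by
    intro A B
    have h : (Jᵀ * A * J) * (Jᵀ * B * J) = Jᵀ * (A * ((J * Jᵀ) * (B * J))) := by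
      simp only [Matrix.mul_assoc]
    rw [h, hJJt, Matrix.one_mul]; simp only [Matrix.mul_assoc]
  have hJc' : Jᴴ = -J := hJc.trans hJt
  have hXH : (M + Jᵀ * Mᴴ * J)ᴴ = Mᴴ + Jᵀ * M * J := by
    simp only [hJt, Matrix.conjTranspose_add, Matrix.conjTranspose_mul,
      Matrix.conjTranspose_conjTranspose, Matrix.conjTranspose_neg, hJc',
      Matrix.neg_mul, Matrix.mul_neg, neg_neg, Matrix.mul_assoc]
  refine ⟨?_, ?_, ?_⟩
  · rw [add_mul, mul_add, mul_add, exp1, sMJtM, exp2, sMHJM, exp3, hMM, hMHMH]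
    simp
  · rw [hXH, add_mul, mul_add, mul_add, mul_add, add_mul, add_mul,
      exp1 Mᴴ Mᴴ, sMHJtMH, exp2 M M, sMJM, exp3 M Mᴴ,
      exp1 M M, sMJtMz, exp2 Mᴴ Mᴴ, sMHJMH, exp3 Mᴴ M, hcomm]
    simp [add_comm]
  · rw [hXH, Matrix.mul_add, Matrix.add_mul]
    have h1 : Jᵀ * (Jᵀ * M * J) * J = M := by
      have h : Jᵀ * (Jᵀ * M * J) * J = (Jᵀ * Jᵀ) * M * (J * J) := by
        simp only [Matrix.mul_assoc]
      rw [h, hJt, neg_mul_neg, hJJ]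
      simp
    rw [h1, add_comm]
end
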